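/- arXiv:2109.07987 — 6 statements merged into one kernel-verified Lean document; each statement's English description precedes it below -/
import Mathlib

section
/- Let H and δH be Hermitian matrices in ℂ^{d×d}, ψ(0) a unit vector, and define ψ(t) = exp(-itH)ψ(0), φ(t) = exp(-it(H+δH))ψ(0), and χ(t) = φ(t) - ψ(t). Then for all Δt ≥ 0, ‖χ(Δt)‖ ≤ ∫₀^{Δt} ⟨ψ(t), δH² ψ(t)⟩^{1/2} dt. -/
noncomputable section

open scoped BigOperators

set_option maxHeartbeats 1000000
set_option synthInstance.maxHeartbeats 400000

/-- Operator norm of a matrix induced by the ℓ² norm on ℂ^d. -/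
def l2opNorm {d : ℕ} (M : Matrix (Fin d) (Fin d) ℂ) : ℝ :=
  ‖Matrix.toEuclideanCLM (𝕜 := ℂ) M‖

/-- Matrix exponential. -/
def mexp {d : ℕ} (M : Matrix (Fin d) (Fin d) ℂ) : Matrix (Fin d) (Fin d) ℂ :=
  NormedSpace.exp M

open NormedSpace in
/-- The exponential of a skew-adjoint operator preserves norms. -/
lemma norm_exp_apply_of_skew {E : Type*} [NormedAddCommGroup E] [InnerProductSpace ℂ E]
    [CompleteSpace E] (T : E →L[ℂ] E) (hT : star T = -T) (v : E) :
    ‖exp T v‖ = ‖v‖ := by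
  let +nondep : NormedAlgebra ℚ (E →L[ℂ] E) := .restrictScalars ℚ ℂ _
  have h1 : star (exp T) * exp T = 1 := by
    rw [star_exp, hT, ← exp_add_of_commute ((Commute.refl T).neg_left), neg_add_cancel, exp_zero]
  have h2 : (inner ℂ (exp T v) (exp T v) : ℂ) = inner ℂ v v := by
    have h3 := ContinuousLinearMap.adjoint_inner_left (𝕜 := ℂ) (exp T) v (exp T v)
    rw [← ContinuousLinearMap.star_eq_adjoint] at h3
    rw [← h3]
    have : star (exp T) (exp T v) = v := by
      have := congrArg (fun (S : E →L[ℂ] E) => S v) h1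
      simpa [ContinuousLinearMap.mul_apply] using this
    rw [this]
  rw [@norm_eq_sqrt_re_inner ℂ, @norm_eq_sqrt_re_inner ℂ _ _ _ _ v, h2]

open NormedSpace in
/-- Duhamel-type bound for the difference of two one-parameter groups. -/
lemma duhamel_bound {E : Type*} [NormedAddCommGroup E] [InnerProductSpace ℂ E]
    [CompleteSpace E] (A B D : E →L[ℂ] E)
    (hBA : B - A = Complex.I • D)
    (hskewA : ∀ s : ℝ, star (s • A) = -(s • A))
    (ψ0 : E) (Δt : ℝ) (hΔt : 0 ≤ Δt) :
    ‖exp (Δt • A) ψ0 - exp (Δt • B) ψ0‖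
      ≤ ∫ t in (0 : ℝ)..Δt, ‖D (exp (t • B) ψ0)‖ := by
  let +nondep : NormedAlgebra ℚ (E →L[ℂ] E) := .restrictScalars ℚ ℂ _
  set f : ℝ → E := fun t => exp ((Δt - t) • A) (exp (t • B) ψ0) with hf
  set g : ℝ → (E →L[ℂ] E) :=
    fun t => exp ((Δt - t) • A) * ((Complex.I • D) * exp (t • B)) with hg
  have hderiv : ∀ t : ℝ, HasDerivAt f (g t ψ0) t := by
    intro t
    have h1 : HasDerivAt (fun u : ℝ => exp ((Δt - u) • A))
        (-(exp ((Δt - t) • A) * A)) t := by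
      have hA1 : HasDerivAt (fun u : ℝ => exp (u • A))
          (exp ((Δt - t) • A) * A) (Δt - t) := by
        have h := hasDerivAt_exp_smul_const (𝕂 := ℝ) A (Δt - t)
        exact h
      have h2 : HasDerivAt (fun u : ℝ => Δt - u) (-1) t := by
        simpa using (hasDerivAt_id t).const_sub Δt
      have := hA1.scomp t h2
      rw [neg_one_smul] at this
      exact this
    have h3 : HasDerivAt (fun u : ℝ => exp (u • B)) (exp (t • B) * B) t := by
      have h := hasDerivAt_exp_smul_const (𝕂 := ℝ) B t
      exact h
    have hc : HasDerivAt (fun u : ℝ => exp ((Δt - u) • A) * exp (u • B))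
        (-(exp ((Δt - t) • A) * A) * exp (t • B)
          + exp ((Δt - t) • A) * (exp (t • B) * B)) t := h1.mul h3
    set L : (E →L[ℂ] E) →L[ℂ] E := (ContinuousLinearMap.apply ℂ E) ψ0 with hL
    have hfc : HasDerivAt f
        ((-(exp ((Δt - t) • A) * A) * exp (t • B)
          + exp ((Δt - t) • A) * (exp (t • B) * B)) ψ0) t :=
      ((L.restrictScalars ℝ).hasFDerivAt.comp_hasDerivAt t hc : _)
    convert hfc using 2
    rw [hg]
    have hcomm : exp (t • B) * B = B * exp (t • B) :=
      (((Commute.refl B).smul_left (t : ℝ)).exp_left).eq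
    rw [hcomm, ← hBA]
    simp only [sub_mul, mul_sub, neg_mul, mul_neg, mul_assoc]
    abel
  have hnormg : ∀ t : ℝ, ‖g t ψ0‖ = ‖D (exp (t • B) ψ0)‖ := by
    intro t
    rw [hg]
    simp only [ContinuousLinearMap.mul_apply]
    rw [norm_exp_apply_of_skew _ (hskewA (Δt - t))]
    simp [norm_smul]
  have hexpAc : Continuous fun t : ℝ => exp ((Δt - t) • A) :=
    exp_continuous.comp ((continuous_const.sub continuous_id).smul continuous_const)
  have hexpBc : Continuous fun t : ℝ => exp (t • B) :=
    exp_continuous.comp (continuous_id.smul continuous_const)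
  have hgc : Continuous fun t => g t ψ0 := by
    apply Continuous.clm_apply _ continuous_const
    exact hexpAc.mul (continuous_const.mul hexpBc)
  have hFTC : ∫ t in (0 : ℝ)..Δt, g t ψ0 = f Δt - f 0 :=
    intervalIntegral.integral_eq_sub_of_hasDerivAt (fun t _ => hderiv t)
      (hgc.intervalIntegrable 0 Δt)
  have hfΔ : f Δt = exp (Δt • B) ψ0 := by
    rw [hf]
    simp
  have hf0 : f 0 = exp (Δt • A) ψ0 := by
    rw [hf]
    simp
  calc ‖exp (Δt • A) ψ0 - exp (Δt • B) ψ0‖ = ‖f 0 - f Δt‖ := by rw [hfΔ, hf0]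
    _ = ‖∫ t in (0 : ℝ)..Δt, g t ψ0‖ := by rw [hFTC, norm_sub_rev]
    _ ≤ ∫ t in (0 : ℝ)..Δt, ‖g t ψ0‖ := intervalIntegral.norm_integral_le_integral_norm hΔt
    _ = _ := intervalIntegral.integral_congr fun t _ => hnormg t

open NormedSpace Matrix in
open scoped Matrix.Norms.L2Operator in
theorem one_step_statistical_error_bound {d : ℕ}
    (H δH : Matrix (Fin d) (Fin d) ℂ) (hH : H.IsHermitian) (hδH : δH.IsHermitian)
    (ψ0 : EuclideanSpace ℂ (Fin d)) (hψ0 : ‖ψ0‖ = 1)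
    (ψ φ χ : ℝ → EuclideanSpace ℂ (Fin d))
    (hψ : ∀ t : ℝ, ψ t = (mexp ((-Complex.I * t) • H)).mulVec ψ0)
    (hφ : ∀ t : ℝ, φ t = (mexp ((-Complex.I * t) • (H + δH))).mulVec ψ0)
    (hχ : ∀ t : ℝ, χ t = φ t - ψ t)
    (Δt : ℝ) (hΔt : 0 ≤ Δt) :
    ‖χ Δt‖ ≤ ∫ t in (0 : ℝ)..Δt,
      Real.sqrt ((inner (𝕜 := ℂ) (ψ t)
        ((WithLp.toLp 2 ((δH ^ 2).mulVec (ψ t)) : EuclideanSpace ℂ (Fin d)))).re) := by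
  let +nondep : NormedAlgebra ℚ (Matrix (Fin d) (Fin d) ℂ) := .restrictScalars ℚ ℂ _
  have hcont : Continuous (⇑(Matrix.toEuclideanCLM (𝕜 := ℂ) (n := Fin d))) :=
    (AddMonoidHomClass.isometry_of_norm _ fun a => (Matrix.cstar_norm_def a).symm).continuous
  set Hc := Matrix.toEuclideanCLM (𝕜 := ℂ) H with hHc
  set Dc := Matrix.toEuclideanCLM (𝕜 := ℂ) δH with hDc
  set A := (-Complex.I) • (Hc + Dc) with hA
  set B := (-Complex.I) • Hc with hB
  have happly : ∀ (M : Matrix (Fin d) (Fin d) ℂ) (v : EuclideanSpace ℂ (Fin d)),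
      (WithLp.toLp 2 (M.mulVec v) : EuclideanSpace ℂ (Fin d)) = Matrix.toEuclideanCLM (𝕜 := ℂ) M v := by
    intro M v
    rfl
  have hsm : ∀ (s : ℝ) (K : EuclideanSpace ℂ (Fin d) →L[ℂ] EuclideanSpace ℂ (Fin d)),
      s • K = ((s : ℂ)) • K := fun s K => RCLike.real_smul_eq_coe_smul (K := ℂ) s K
  have hHcstar : star Hc = Hc := by
    rw [hHc, ← map_star]
    exact congrArg _ hH
  have hDcstar : star Dc = Dc := by
    rw [hDc, ← map_star]
    exact congrArg _ hδH
  have hAstar : star A = -A := by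
    rw [hA]
    simp only [star_smul, star_add, hHcstar, hDcstar, Complex.star_def, map_neg, Complex.conj_I]
    rw [ContinuousLinearMap.star_eq_adjoint, map_add, ← ContinuousLinearMap.star_eq_adjoint,
      ← ContinuousLinearMap.star_eq_adjoint, hHcstar, hDcstar]
    module
  have hskewA : ∀ s : ℝ, star (s • A) = -(s • A) := by
    intro s
    rw [hsm, star_smul, Complex.star_def, Complex.conj_ofReal, hAstar, smul_neg]
  have hsmul : ∀ (t : ℝ) (K : EuclideanSpace ℂ (Fin d) →L[ℂ] EuclideanSpace ℂ (Fin d)),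
      ((-Complex.I * t) : ℂ) • K = t • ((-Complex.I) • K) := by
    intro t K
    rw [hsm, smul_smul, mul_comm]
  have hψ' : ∀ t : ℝ, ψ t = exp (t • B) ψ0 := by
    intro t
    rw [← WithLp.toLp_ofLp 2 (ψ t), hψ t, happly]
    have e1 : Matrix.toEuclideanCLM (𝕜 := ℂ) (mexp ((-Complex.I * t) • H)) = exp (t • B) := by
      rw [show (mexp ((-Complex.I * (t : ℂ)) • H)) = exp ((-Complex.I * (t : ℂ)) • H) from rfl,
        map_exp _ hcont, _root_.map_smul,
        hsmul t (Matrix.toEuclideanCLM (𝕜 := ℂ) H), ← hHc, ← hB]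
    rw [e1]
  have hφ' : ∀ t : ℝ, φ t = exp (t • A) ψ0 := by
    intro t
    rw [← WithLp.toLp_ofLp 2 (φ t), hφ t, happly]
    have e1 : Matrix.toEuclideanCLM (𝕜 := ℂ) (mexp ((-Complex.I * t) • (H + δH)))
        = exp (t • A) := by
      rw [show (mexp ((-Complex.I * (t : ℂ)) • (H + δH)))
            = exp ((-Complex.I * (t : ℂ)) • (H + δH)) from rfl,
        map_exp _ hcont, _root_.map_smul, map_add, hsmul t _, ← hHc, ← hDc, ← hA]
    rw [e1]
  have hBA : B - A = Complex.I • Dc := by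
    rw [hA, hB]
    module
  have hint : ∀ t : ℝ, Real.sqrt ((inner (𝕜 := ℂ) (ψ t)
      ((WithLp.toLp 2 ((δH ^ 2).mulVec (ψ t)) : EuclideanSpace ℂ (Fin d)))).re) = ‖Dc (ψ t)‖ := by
    intro t
    have h2 : (WithLp.toLp 2 ((δH ^ 2).mulVec (ψ t)) : EuclideanSpace ℂ (Fin d)) = Dc (Dc (ψ t)) := by
      rw [happly, map_pow]
      simp [pow_two, ContinuousLinearMap.mul_apply, hDc]
    rw [h2]
    have h4 : ContinuousLinearMap.adjoint Dc = Dc := by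
      rw [← ContinuousLinearMap.star_eq_adjoint, hDcstar]
    have h3 : (inner (𝕜 := ℂ) (ψ t) (Dc (Dc (ψ t))) : ℂ)
        = inner ℂ (Dc (ψ t)) (Dc (ψ t)) := by
      have := ContinuousLinearMap.adjoint_inner_left (𝕜 := ℂ) Dc (Dc (ψ t)) (ψ t)
      rw [h4] at this
      exact this.symm
    rw [h3]
    rw [show ((inner (𝕜 := ℂ) (Dc (ψ t)) (Dc (ψ t)) : ℂ)).re = ‖Dc (ψ t)‖ ^ 2 by
      rw [← @inner_self_eq_norm_sq ℂ]; rfl]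
    exact Real.sqrt_sq (norm_nonneg _)
  have hmain := duhamel_bound A B Dc hBA hskewA ψ0 Δt hΔt
  have hrw : ∫ t in (0 : ℝ)..Δt,
      Real.sqrt ((inner (𝕜 := ℂ) (ψ t)
        ((WithLp.toLp 2 ((δH ^ 2).mulVec (ψ t)) : EuclideanSpace ℂ (Fin d)))).re)
      = ∫ t in (0 : ℝ)..Δt, ‖Dc (exp (t • B) ψ0)‖ :=
    intervalIntegral.integral_congr fun t _ => by rw [hint t, hψ' t]
  rw [hrw, hχ Δt, hφ' Δt, hψ' Δt]
  exact hmain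
end
end

section
/- Under the hypotheses of the perturbation bound (H, δH Hermitian, ψ(0) a unit vector, χ(Δt) = exp(-iΔt(H+δH))ψ(0) - exp(-iΔtH)ψ(0), ψ(t) = exp(-itH)ψ(0)), the squared error satisfies ⟨χ(Δt),χ(Δt)⟩ ≤ Δt · ∫₀^{Δt} ⟨ψ(t), δH² ψ(t)⟩ dt. -/
noncomputable section

open scoped BigOperators

open NormedSpace in
lemma aux_toCLM_exp {d : ℕ} (M : Matrix (Fin d) (Fin d) ℂ) :
    Matrix.toEuclideanCLM (𝕜 := ℂ) (exp M) = exp (Matrix.toEuclideanCLM (𝕜 := ℂ) M) := by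
  letI : SeminormedRing (Matrix (Fin d) (Fin d) ℂ) := Matrix.linftyOpSemiNormedRing
  letI : NormedRing (Matrix (Fin d) (Fin d) ℂ) := Matrix.linftyOpNormedRing
  letI : NormedAlgebra ℂ (Matrix (Fin d) (Fin d) ℂ) := Matrix.linftyOpNormedAlgebra
  letI : NormedAlgebra ℚ (Matrix (Fin d) (Fin d) ℂ) := NormedAlgebra.restrictScalars ℚ ℂ _
  have hc : Continuous (Matrix.toEuclideanCLM (𝕜 := ℂ) (n := Fin d)) := by
    let f : Matrix (Fin d) (Fin d) ℂ →ₗ[ℂ]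
        (EuclideanSpace ℂ (Fin d) →L[ℂ] EuclideanSpace ℂ (Fin d)) :=
      { toFun := Matrix.toEuclideanCLM (𝕜 := ℂ) (n := Fin d),
        map_add' := map_add _, map_smul' := map_smul _ }
    exact LinearMap.continuous_of_finiteDimensional f
  exact map_exp (Matrix.toEuclideanCLM (𝕜 := ℂ) (n := Fin d)) hc M

open NormedSpace in
lemma aux_norm_exp_apply {d : ℕ}
    (S : EuclideanSpace ℂ (Fin d) →L[ℂ] EuclideanSpace ℂ (Fin d))
    (hS : star S = S) (z : ℂ) (hz : star z = -z) (v : EuclideanSpace ℂ (Fin d)) :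
    ‖exp (z • S) v‖ = ‖v‖ := by
  letI : NormedAlgebra ℚ (EuclideanSpace ℂ (Fin d) →L[ℂ] EuclideanSpace ℂ (Fin d)) :=
    NormedAlgebra.restrictScalars ℚ ℂ _
  set U := exp (z • S) with hU
  have h1 : star U * U = 1 := by
    have hcomm : Commute ((-z) • S) (z • S) :=
      Commute.smul_left ((Commute.refl S).smul_right z) (-z)
    rw [hU, star_exp, star_smul, hS, hz, ← exp_add_of_commute hcomm]
    have h0 : (-z) • S + z • S = 0 := by module
    rw [h0, exp_zero]
  have h2 : (star U) (U v) = v := by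
    have := congrArg (fun (W : EuclideanSpace ℂ (Fin d) →L[ℂ] EuclideanSpace ℂ (Fin d)) => W v) h1
    simpa using this
  have h3 : (inner (𝕜 := ℂ) (U v) (U v)) = inner (𝕜 := ℂ) v v := by
    calc inner (𝕜 := ℂ) (U v) (U v) = inner (𝕜 := ℂ) v ((star U) (U v)) := by
          rw [ContinuousLinearMap.star_eq_adjoint, ContinuousLinearMap.adjoint_inner_right]
      _ = inner (𝕜 := ℂ) v v := by rw [h2]
  have h4 : ‖U v‖ ^ 2 = ‖v‖ ^ 2 := by
    rw [← inner_self_eq_norm_sq (𝕜 := ℂ), ← inner_self_eq_norm_sq (𝕜 := ℂ), h3]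
  have := norm_nonneg (U v); have := norm_nonneg v
  nlinarith [h4]

lemma aux_cauchy_schwarz {f : ℝ → ℝ} {Δt : ℝ} (hΔt : 0 ≤ Δt) (hf : Continuous f) :
    (∫ t in (0:ℝ)..Δt, f t) ^ 2 ≤ Δt * ∫ t in (0:ℝ)..Δt, (f t) ^ 2 := by
  rcases eq_or_lt_of_le hΔt with h | h
  · simp [← h]
  · set J := ∫ t in (0:ℝ)..Δt, f t with hJ
    set Q := ∫ t in (0:ℝ)..Δt, (f t) ^ 2 with hQ
    set c := J / Δt with hc
    have key : (0:ℝ) ≤ ∫ t in (0:ℝ)..Δt, (f t - c) ^ 2 :=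
      intervalIntegral.integral_nonneg hΔt (fun t _ => sq_nonneg _)
    have hint1 : IntervalIntegrable f MeasureTheory.volume 0 Δt := hf.intervalIntegrable _ _
    have hint2 : IntervalIntegrable (fun t => (f t) ^ 2) MeasureTheory.volume 0 Δt :=
      (hf.pow 2).intervalIntegrable _ _
    have expand : ∫ t in (0:ℝ)..Δt, (f t - c) ^ 2
        = Q - (2 * c) * J + c ^ 2 * Δt := by
      have h1 : ∀ t : ℝ, (f t - c) ^ 2 = (f t) ^ 2 - (2 * c) * (f t) + c ^ 2 := by
        intro t; ring
      simp only [h1]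
      rw [intervalIntegral.integral_add ((hint2.sub (hint1.const_mul _))) (intervalIntegrable_const),
        intervalIntegral.integral_sub hint2 (hint1.const_mul _),
        intervalIntegral.integral_const_mul, intervalIntegral.integral_const]
      simp [hJ, hQ]
      ring
    rw [expand] at key
    have hcΔ : c * Δt = J := by rw [hc]; exact div_mul_cancel₀ J h.ne'
    nlinarith [mul_nonneg h.le key, hcΔ]


set_option maxHeartbeats 1000000 in
set_option synthInstance.maxHeartbeats 200000 in
open NormedSpace in
theorem one_step_mean_square_error_bound {d : ℕ}
    (H δH : Matrix (Fin d) (Fin d) ℂ) (hH : H.IsHermitian) (hδH : δH.IsHermitian)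
    (ψ0 : EuclideanSpace ℂ (Fin d)) (hψ0 : ‖ψ0‖ = 1)
    (ψ χ : ℝ → EuclideanSpace ℂ (Fin d))
    (hψ : ∀ t : ℝ, ψ t = (mexp ((-Complex.I * t) • H)).mulVec ψ0)
    (hχ : ∀ t : ℝ, χ t = (mexp ((-Complex.I * t) • (H + δH))).mulVec ψ0
                        - (mexp ((-Complex.I * t) • H)).mulVec ψ0)
    (Δt : ℝ) (hΔt : 0 ≤ Δt) :
    (inner (𝕜 := ℂ) (χ Δt) (χ Δt)).re ≤
      Δt * ∫ t in (0 : ℝ)..Δt,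
        (inner (𝕜 := ℂ) (ψ t) ((WithLp.toLp 2 ((δH ^ 2).mulVec (ψ t)) : EuclideanSpace ℂ (Fin d)))).re := by
  classical
  letI : NormedAlgebra ℚ (EuclideanSpace ℂ (Fin d) →L[ℂ] EuclideanSpace ℂ (Fin d)) :=
    NormedAlgebra.restrictScalars ℚ ℂ _
  set A := Matrix.toEuclideanCLM (𝕜 := ℂ) H with hA
  set B := Matrix.toEuclideanCLM (𝕜 := ℂ) δH with hB
  set C := Matrix.toEuclideanCLM (𝕜 := ℂ) (H + δH) with hCdef
  have hC : C = A + B := map_add _ _ _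
  have happ : ∀ (M : Matrix (Fin d) (Fin d) ℂ) (x : EuclideanSpace ℂ (Fin d)),
      (WithLp.toLp 2 (M.mulVec x) : EuclideanSpace ℂ (Fin d)) = Matrix.toEuclideanCLM (𝕜 := ℂ) M x :=
    fun M x => rfl
  have hAsa : star A = A := by
    rw [hA, ← map_star]; exact congrArg _ hH
  have hBsa : star B = B := by
    rw [hB, ← map_star]; exact congrArg _ hδH
  have hCsa : star C = C := by
    rw [hCdef, ← map_star]; exact congrArg _ (hH.add hδH)
  -- rewrite ψ and χ in CLM exponential form
  have hψE : ∀ t : ℝ, ψ t = exp ((-Complex.I * t) • A) ψ0 := by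
    intro t
    rw [← WithLp.toLp_ofLp 2 (ψ t), hψ t, happ, mexp, aux_toCLM_exp, map_smul]
  have hχE : ∀ t : ℝ, χ t = exp ((-Complex.I * t) • C) ψ0
      - exp ((-Complex.I * t) • A) ψ0 := by
    intro t
    rw [← WithLp.toLp_ofLp 2 (χ t), hχ t, WithLp.toLp_sub, happ, happ, mexp, mexp, aux_toCLM_exp, aux_toCLM_exp, map_smul, map_smul]
  -- Duhamel formula
  set g : ℝ → ℂ := fun s => -Complex.I * Δt + Complex.I * s with hg
  set k : ℝ → ℂ := fun s => -Complex.I * s with hk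
  set F : ℝ → EuclideanSpace ℂ (Fin d) :=
    fun s => exp (g s • C) (exp (k s • A) ψ0) with hF
  set Φ : ℝ → EuclideanSpace ℂ (Fin d) :=
    fun s => Complex.I • exp (g s • C) (B (ψ s)) with hΦ
  have hgd : ∀ s : ℝ, HasDerivAt g Complex.I s := by
    intro s
    have h1 : HasDerivAt (fun s : ℝ => (s : ℂ)) 1 s := Complex.ofRealCLM.hasDerivAt
    simpa [hg, neg_mul] using (h1.const_mul Complex.I).const_add (-(Complex.I * Δt))
  have hkd : ∀ s : ℝ, HasDerivAt k (-Complex.I) s := by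
    intro s
    have h1 : HasDerivAt (fun s : ℝ => (s : ℂ)) 1 s := Complex.ofRealCLM.hasDerivAt
    simpa [hk, neg_mul] using h1.const_mul (-Complex.I)
  have hderiv : ∀ s : ℝ, HasDerivAt F (Φ s) s := by
    intro s
    have h2 : HasDerivAt (fun s : ℝ => exp (g s • C))
        (Complex.I • (exp (g s • C) * C)) s :=
      HasDerivAt.scomp (h := g) (x := s) (hasDerivAt_exp_smul_const C (g s)) (hgd s)
    have h3 : HasDerivAt (fun s : ℝ => exp (k s • A))
        ((-Complex.I) • (exp (k s • A) * A)) s :=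
      HasDerivAt.scomp (h := k) (x := s) (hasDerivAt_exp_smul_const A (k s)) (hkd s)
    let ρ : (EuclideanSpace ℂ (Fin d) →L[ℂ] EuclideanSpace ℂ (Fin d)) →L[ℝ]
        (EuclideanSpace ℂ (Fin d) →L[ℝ] EuclideanSpace ℂ (Fin d)) :=
      (ContinuousLinearMap.restrictScalarsIsometry ℂ (EuclideanSpace ℂ (Fin d))
        (EuclideanSpace ℂ (Fin d)) ℝ ℝ).toContinuousLinearMap
    have hc : HasDerivAt (fun s : ℝ => ρ (exp (g s • C)))
        (ρ (Complex.I • (exp (g s • C) * C))) s :=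
      ρ.hasFDerivAt.comp_hasDerivAt s h2
    have hu : HasDerivAt (fun s : ℝ => ρ (exp (k s • A)) ψ0)
        ((ρ ((-Complex.I) • (exp (k s • A) * A))) ψ0) s := by
      simpa using (ρ.hasFDerivAt.comp_hasDerivAt s h3).clm_apply (hasDerivAt_const s ψ0)
    have h5 := hc.clm_apply hu
    have h6 : HasDerivAt F
        ((Complex.I • (exp (g s • C) * C)) (exp (k s • A) ψ0)
          + (exp (g s • C)) (((-Complex.I) • (exp (k s • A) * A)) ψ0)) s := h5
    convert h6 using 1
    have hcomm : A * exp (k s • A) = exp (k s • A) * A :=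
      ((Commute.refl A).smul_right (k s)).exp_right
    have hψs : exp (k s • A) ψ0 = ψ s := by rw [hψE s, hk]
    have hAcomm : exp (k s • A) (A ψ0) = A (exp (k s • A) ψ0) := by
      have := congrArg (fun (W : EuclideanSpace ℂ (Fin d) →L[ℂ] EuclideanSpace ℂ (Fin d)) =>
        W ψ0) hcomm
      simpa using this.symm
    rw [hΦ, hC]
    simp only [ContinuousLinearMap.smul_apply, ContinuousLinearMap.mul_apply,
      ContinuousLinearMap.add_apply, map_add, map_smul, smul_add, hAcomm, hψs]
    module
  -- continuity
  have hkc : Continuous k := by rw [hk]; fun_prop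
  have hgc : Continuous g := by rw [hg]; fun_prop
  have hψc : Continuous ψ := by
    have h1 : Continuous fun s : ℝ => exp (k s • A) :=
      exp_continuous.comp (hkc.smul continuous_const)
    have h2 : Continuous fun s : ℝ => exp (k s • A) ψ0 := h1.clm_apply continuous_const
    have h3 : ψ = fun s : ℝ => exp (k s • A) ψ0 := funext fun s => by
      rw [hψE s, hk]
    rw [h3]; exact h2
  have hΦc : Continuous Φ := by
    rw [hΦ]
    exact (((exp_continuous.comp (hgc.smul continuous_const)).clm_apply
      (B.continuous.comp hψc))).const_smul Complex.I
  -- FTC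
  have hFTC : ∫ s in (0:ℝ)..Δt, Φ s = F Δt - F 0 :=
    intervalIntegral.integral_eq_sub_of_hasDerivAt (fun s _ => hderiv s)
      (hΦc.intervalIntegrable 0 Δt)
  have hF0 : F 0 = exp ((-Complex.I * (Δt:ℝ)) • C) ψ0 := by
    have hk0 : k 0 • A = (0 : EuclideanSpace ℂ (Fin d) →L[ℂ] EuclideanSpace ℂ (Fin d)) := by
      rw [hk]; push_cast; rw [mul_zero]; exact zero_smul ℂ A
    have hg0 : g 0 = -Complex.I * (Δt:ℝ) := by rw [hg]; push_cast; ring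
    simp only [hF]
    rw [hk0, exp_zero, ContinuousLinearMap.one_apply, hg0]
  have hgΔ : g Δt = 0 := by rw [hg]; ring
  have hFΔ : F Δt = ψ Δt := by
    have hgΔ0 : g Δt • C = (0 : EuclideanSpace ℂ (Fin d) →L[ℂ] EuclideanSpace ℂ (Fin d)) := by
      rw [hgΔ]; exact zero_smul ℂ C
    simp only [hF]
    rw [hgΔ0, exp_zero, ContinuousLinearMap.one_apply, hψE Δt, hk]
  have hχInt : χ Δt = -∫ s in (0:ℝ)..Δt, Φ s := by
    rw [hχE Δt, hFTC, hF0.symm, hFΔ]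
    rw [hψE Δt, neg_sub]
  -- norm bound
  have hzs : ∀ s : ℝ, star (g s) = -(g s) := by
    intro s
    rw [hg]
    simp only [star_add, star_mul', star_neg, Complex.star_def, Complex.conj_I,
      Complex.conj_ofReal]
    ring
  have hnorm : ‖χ Δt‖ ≤ ∫ s in (0:ℝ)..Δt, ‖B (ψ s)‖ := by
    rw [hχInt, norm_neg]
    refine le_trans (intervalIntegral.norm_integral_le_integral_norm hΔt)
      (le_of_eq (intervalIntegral.integral_congr fun s _ => ?_))
    rw [hΦ]
    simp only [norm_smul, Complex.norm_I, one_mul]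
    rw [aux_norm_exp_apply C hCsa (g s) (hzs s) (B (ψ s))]
  have hBψ : Continuous fun s : ℝ => ‖B (ψ s)‖ := (B.continuous.comp hψc).norm
  -- pointwise identification of the integrand
  have hfsq : ∀ s : ℝ, ‖B (ψ s)‖ ^ 2
      = (inner (𝕜 := ℂ) (ψ s) ((WithLp.toLp 2 ((δH ^ 2).mulVec (ψ s)) : EuclideanSpace ℂ (Fin d)))).re := by
    intro s
    have h1 : (WithLp.toLp 2 ((δH ^ 2).mulVec (ψ s)) : EuclideanSpace ℂ (Fin d)) = B (B (ψ s)) := by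
      rw [happ, map_pow, pow_two, ContinuousLinearMap.mul_apply]
    have h2 : B (B (ψ s)) = (ContinuousLinearMap.adjoint B) (B (ψ s)) := by
      rw [← ContinuousLinearMap.star_eq_adjoint, hBsa]
    rw [h1, h2, ContinuousLinearMap.adjoint_inner_right]
    exact (inner_self_eq_norm_sq (𝕜 := ℂ) (B (ψ s))).symm
  -- final chain
  calc (inner (𝕜 := ℂ) (χ Δt) (χ Δt)).re = ‖χ Δt‖ ^ 2 :=
        inner_self_eq_norm_sq (𝕜 := ℂ) (χ Δt)
    _ ≤ (∫ s in (0:ℝ)..Δt, ‖B (ψ s)‖) ^ 2 := by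
        have h0 : (0:ℝ) ≤ ∫ s in (0:ℝ)..Δt, ‖B (ψ s)‖ :=
          intervalIntegral.integral_nonneg hΔt (fun s _ => norm_nonneg _)
        exact pow_le_pow_left₀ (norm_nonneg _) hnorm 2
    _ ≤ Δt * ∫ s in (0:ℝ)..Δt, ‖B (ψ s)‖ ^ 2 := aux_cauchy_schwarz hΔt hBψ
    _ = Δt * ∫ t in (0:ℝ)..Δt,
        (inner (𝕜 := ℂ) (ψ t) ((WithLp.toLp 2 ((δH ^ 2).mulVec (ψ t)) : EuclideanSpace ℂ (Fin d)))).re := by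
        congr 1
        exact intervalIntegral.integral_congr fun s _ => hfsq s
end
end

section
/- Let H₀ and H₁ be Hermitian matrices in ℂ^{d×d}, ψ(0) a unit vector, and define χ(Δt) = exp(-iΔtH₀)exp(-iΔtH₁)ψ(0) - exp(-iΔt(H₀+H₁))ψ(0). Then ‖χ(Δt)‖ ≤ (Δt²/2)·‖[H₀,H₁]‖, where [H₀,H₁] = H₀H₁ - H₁H₀ and ‖·‖ is the operator norm. -/
set_option maxHeartbeats 1600000

noncomputable section

open scoped BigOperators
open NormedSpace

section Aux

variable {A : Type*} [NormedRing A] [StarRing A] [CStarRing A] [NormedAlgebra ℂ A]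
  [CompleteSpace A] [StarModule ℂ A] [NormOneClass A]

lemma exp_mul_exp_neg (x : A) (s : ℝ) : exp (s • x) * exp (s • (-x)) = 1 := by
  letI : NormedAlgebra ℚ A := NormedAlgebra.restrictScalars ℚ ℂ A
  rw [← exp_add_of_commute (by rw [smul_neg]; exact (Commute.refl _).neg_right)]
  rw [smul_neg, add_neg_cancel, exp_zero]

lemma norm_exp_skew (x : A) (hx : star x = -x) (s : ℝ) : ‖exp (s • x)‖ = 1 := by
  have hst : star (s • x) = -(s • x) := by
    rw [star_smul, star_trivial, hx, smul_neg]
  have h1 : star (exp (s • x)) * exp (s • x) = 1 := by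
    letI : NormedAlgebra ℚ A := NormedAlgebra.restrictScalars ℚ ℂ A
    rw [star_exp, hst, ← exp_add_of_commute ((Commute.refl _).neg_left),
      neg_add_cancel, exp_zero]
  have h2 := CStarRing.norm_star_mul_self (x := exp (s • x))
  rw [h1, norm_one] at h2
  have h0 : (0:ℝ) ≤ ‖exp (s • x)‖ := norm_nonneg _
  nlinarith

lemma comm_bound (x y : A) (hx : star x = -x) (s : ℝ) (hs : 0 ≤ s) :
    ‖exp (s • x) * y - y * exp (s • x)‖ ≤ s * ‖x * y - y * x‖ := by
  have hnx : star (-x) = -(-x) := by rw [star_neg, hx]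
  set M : ℝ → A := fun u => exp (u • (-x)) * y * exp (u • x) with hMdef
  have hM : ∀ u, HasDerivAt M
      (exp (u • (-x)) * (y * x - x * y) * exp (u • x)) u := by
    intro u
    have h1 : HasDerivAt (fun v : ℝ => exp (v • (-x))) (exp (u • (-x)) * (-x)) u :=
      hasDerivAt_exp_smul_const (-x) u
    have h2 : HasDerivAt (fun v : ℝ => exp (v • x)) (x * exp (u • x)) u :=
      hasDerivAt_exp_smul_const' x u
    have h3 := (h1.mul_const y).mul h2
    convert h3 using 1
    · rfl
    noncomm_ring
  have hbd : ∀ u ∈ Set.Icc (0:ℝ) s,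
      HasDerivWithinAt M (exp (u • (-x)) * (y * x - x * y) * exp (u • x))
        (Set.Icc 0 s) u := fun u _ => (hM u).hasDerivWithinAt
  have hboundM : ∀ u ∈ Set.Ico (0:ℝ) s,
      ‖exp (u • (-x)) * (y * x - x * y) * exp (u • x)‖ ≤ ‖x * y - y * x‖ := by
    intro u _
    calc ‖exp (u • (-x)) * (y * x - x * y) * exp (u • x)‖
        ≤ ‖exp (u • (-x)) * (y * x - x * y)‖ * ‖exp (u • x)‖ := norm_mul_le _ _
      _ ≤ ‖exp (u • (-x))‖ * ‖y * x - x * y‖ * ‖exp (u • x)‖ :=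
          mul_le_mul_of_nonneg_right (norm_mul_le _ _) (norm_nonneg _)
      _ = ‖x * y - y * x‖ := by
          rw [norm_exp_skew _ hnx, norm_exp_skew _ hx, one_mul, mul_one, norm_sub_rev]
  have key := norm_image_sub_le_of_norm_deriv_le_segment' hbd hboundM s
    (Set.right_mem_Icc.2 hs)
  have hM0 : M 0 = y := by
    simp [hMdef, exp_zero]
  rw [hM0, sub_zero] at key
  have hfact : exp (s • x) * y - y * exp (s • x) = exp (s • x) * (y - M s) := by
    rw [mul_sub, hMdef]
    simp only
    rw [← mul_assoc, ← mul_assoc, exp_mul_exp_neg x s, one_mul]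
  rw [hfact]
  calc ‖exp (s • x) * (y - M s)‖ ≤ ‖exp (s • x)‖ * ‖y - M s‖ := norm_mul_le _ _
    _ = ‖M s - y‖ := by rw [norm_exp_skew _ hx, one_mul, norm_sub_rev]
    _ ≤ ‖x * y - y * x‖ * s := key
    _ = s * ‖x * y - y * x‖ := mul_comm _ _

lemma trotter_op (a b : A) (ha : star a = a) (hb : star b = b) (t : ℝ) (ht : 0 ≤ t) :
    ‖exp (t • ((-Complex.I) • a)) * exp (t • ((-Complex.I) • b))
      - exp (t • ((-Complex.I) • (a + b)))‖ ≤ t ^ 2 / 2 * ‖a * b - b * a‖ := by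
  set x : A := (-Complex.I) • a with hxdef
  set y : A := (-Complex.I) • b with hydef
  have hskew : ∀ c : A, star c = c → star ((-Complex.I) • c) = -((-Complex.I) • c) := by
    intro c hc
    rw [star_smul, hc]
    simp
  have hx : star x = -x := hskew a ha
  have hy : star y = -y := hskew b hb
  have hz : star (x + y) = -(x + y) := by rw [star_add, hx, hy, neg_add]
  have hxyz : x + y = (-Complex.I) • (a + b) := (smul_add _ _ _).symm
  have hC : ‖x * y - y * x‖ = ‖a * b - b * a‖ := by
    have h1 : x * y - y * x = -(a * b - b * a) := by
      rw [hxdef, hydef, smul_mul_smul_comm, smul_mul_smul_comm]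
      rw [← smul_sub]
      have : (-Complex.I) * (-Complex.I) = -1 := by
        simp [Complex.ext_iff]
      rw [this, neg_one_smul]
    rw [h1, norm_neg]
  set G : ℝ → A := fun s => exp (s • (-(x + y))) * (exp (s • x) * exp (s • y))
    with hGdef
  set G' : ℝ → A := fun s =>
    exp (s • (-(x + y))) * ((exp (s • x) * y - y * exp (s • x)) * exp (s • y))
    with hG'def
  have hG : ∀ s, HasDerivAt G (G' s) s := by
    intro s
    have h1 : HasDerivAt (fun v : ℝ => exp (v • (-(x + y))))
        (exp (s • (-(x + y))) * (-(x + y))) s := hasDerivAt_exp_smul_const _ s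
    have h2 : HasDerivAt (fun v : ℝ => exp (v • x)) (x * exp (s • x)) s :=
      hasDerivAt_exp_smul_const' x s
    have h3 : HasDerivAt (fun v : ℝ => exp (v • y)) (exp (s • y) * y) s :=
      hasDerivAt_exp_smul_const y s
    have h4 := h1.mul (h2.mul h3)
    convert h4 using 1
    · rfl
    have hcomm : exp (s • y) * y = y * exp (s • y) :=
      (((Commute.refl y).smul_left s).exp_left)
    rw [hG'def]
    simp only [Pi.mul_apply]
    rw [hcomm]
    noncomm_ring
  have key : ∀ s ∈ Set.Icc (0:ℝ) t, ‖G s - 1‖ ≤ s ^ 2 / 2 * ‖x * y - y * x‖ := by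
    have hf : ContinuousOn (fun s => G s - 1) (Set.Icc 0 t) := fun s _ =>
      (((hG s).sub_const 1).continuousAt.continuousWithinAt)
    have hf' : ∀ s ∈ Set.Ico (0:ℝ) t,
        HasDerivWithinAt (fun s => G s - 1) (G' s) (Set.Ici s) s := fun s _ =>
      ((hG s).sub_const 1).hasDerivWithinAt
    have ha0 : ‖G 0 - 1‖ ≤ (0:ℝ) ^ 2 / 2 * ‖x * y - y * x‖ := by
      have : G 0 = 1 := by simp [hGdef, exp_zero]
      simp [this]
    have hB : ∀ s : ℝ, HasDerivAt (fun s : ℝ => s ^ 2 / 2 * ‖x * y - y * x‖)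
        (s * ‖x * y - y * x‖) s := by
      intro s
      have := ((hasDerivAt_pow 2 s).div_const 2).mul_const ‖x * y - y * x‖
      refine this.congr_deriv ?_
      ring
    have hbound : ∀ s ∈ Set.Ico (0:ℝ) t, ‖G' s‖ ≤ s * ‖x * y - y * x‖ := by
      intro s hs
      calc ‖G' s‖ ≤ ‖exp (s • (-(x + y)))‖ *
            ‖(exp (s • x) * y - y * exp (s • x)) * exp (s • y)‖ := norm_mul_le _ _
        _ ≤ 1 * (‖exp (s • x) * y - y * exp (s • x)‖ * ‖exp (s • y)‖) := by
            rw [norm_exp_skew _ (by rw [star_neg, hz])]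
            exact mul_le_mul_of_nonneg_left (norm_mul_le _ _) zero_le_one
        _ = ‖exp (s • x) * y - y * exp (s • x)‖ := by
            rw [norm_exp_skew _ hy, one_mul, mul_one]
        _ ≤ s * ‖x * y - y * x‖ := comm_bound x y hx s hs.1
    exact fun s hs =>
      image_norm_le_of_norm_deriv_right_le_deriv_boundary hf hf' ha0 hB hbound hs
  have hGt := key t (Set.right_mem_Icc.2 ht)
  have hfact : exp (t • x) * exp (t • y) - exp (t • (x + y))
      = exp (t • (x + y)) * (G t - 1) := by
    rw [mul_sub, mul_one, hGdef]
    simp only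
    rw [← mul_assoc, exp_mul_exp_neg (x + y) t, one_mul]
  rw [← hxyz, hfact]
  calc ‖exp (t • (x + y)) * (G t - 1)‖ ≤ ‖exp (t • (x + y))‖ * ‖G t - 1‖ :=
        norm_mul_le _ _
    _ = ‖G t - 1‖ := by rw [norm_exp_skew _ hz, one_mul]
    _ ≤ t ^ 2 / 2 * ‖x * y - y * x‖ := hGt
    _ = t ^ 2 / 2 * ‖a * b - b * a‖ := by rw [hC]

end Aux

theorem trotter_splitting_error_bound {d : ℕ}
    (H₀ H₁ : Matrix (Fin d) (Fin d) ℂ) (hH₀ : H₀.IsHermitian) (hH₁ : H₁.IsHermitian)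
    (ψ0 : EuclideanSpace ℂ (Fin d)) (hψ0 : ‖ψ0‖ = 1)
    (Δt : ℝ) (hΔt : 0 ≤ Δt)
    (χ : EuclideanSpace ℂ (Fin d))
    (hχ : χ = (mexp ((-Complex.I * Δt) • H₀) * mexp ((-Complex.I * Δt) • H₁)).mulVec ψ0
            - (mexp ((-Complex.I * Δt) • (H₀ + H₁))).mulVec ψ0) :
    ‖χ‖ ≤ Δt ^ 2 / 2 * l2opNorm (H₀ * H₁ - H₁ * H₀) := by
  rcases Nat.eq_zero_or_pos d with hd | hd
  · subst hd
    have : ψ0 = 0 := Subsingleton.elim _ _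
    rw [this, norm_zero] at hψ0
    norm_num at hψ0
  haveI : Nonempty (Fin d) := Fin.pos_iff_nonempty.mp hd
  haveI : Nontrivial (EuclideanSpace ℂ (Fin d)) := inferInstance
  set φ := Matrix.toEuclideanCLM (𝕜 := ℂ) (n := Fin d) with hφdef
  have hφexp : ∀ M : Matrix (Fin d) (Fin d) ℂ, φ (mexp M) = exp (φ M) := by
    intro M
    have hlin : Continuous (φ.symm : (EuclideanSpace ℂ (Fin d) →L[ℂ] EuclideanSpace ℂ (Fin d))
        → Matrix (Fin d) (Fin d) ℂ) :=
      LinearMap.continuous_of_finiteDimensional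
        { toFun := φ.symm, map_add' := map_add _,
          map_smul' := map_smul _ :
          (EuclideanSpace ℂ (Fin d) →L[ℂ] EuclideanSpace ℂ (Fin d)) →ₗ[ℂ]
            Matrix (Fin d) (Fin d) ℂ }
    have h1 : HasSum (fun n : ℕ => ((n.factorial : ℂ))⁻¹ • (φ M) ^ n) (exp (φ M)) :=
      exp_series_hasSum_exp' (φ M)
    have h2 := h1.map
      ({ toFun := φ.symm, map_zero' := map_zero _, map_add' := map_add _ } :
        (EuclideanSpace ℂ (Fin d) →L[ℂ] EuclideanSpace ℂ (Fin d)) →+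
          Matrix (Fin d) (Fin d) ℂ) hlin
    have h3 : HasSum (fun n : ℕ => ((n.factorial : ℂ))⁻¹ • M ^ n) (φ.symm (exp (φ M))) := by
      convert h2 using 2 with n
      simp only [AddMonoidHom.coe_mk, ZeroHom.coe_mk, Function.comp_apply]
      rw [map_smul, map_pow, StarAlgEquiv.symm_apply_apply]
      rfl
    have h4 : mexp M = φ.symm (exp (φ M)) := by
      rw [mexp, exp_eq_tsum (𝕂 := ℂ)]
      exact h3.tsum_eq
    rw [h4, StarAlgEquiv.apply_symm_apply]
  set a := φ H₀ with hadef
  set b := φ H₁ with hbdef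
  have ha : star a = a := by rw [hadef, ← map_star]; exact congrArg φ hH₀
  have hb : star b = b := by rw [hbdef, ← map_star]; exact congrArg φ hH₁
  -- rewrite χ as an operator applied to ψ0
  have hexp_eq : ∀ M : Matrix (Fin d) (Fin d) ℂ,
      φ (mexp ((-Complex.I * Δt) • M)) = exp (Δt • ((-Complex.I) • φ M)) := by
    intro M
    rw [hφexp]
    congr 1
    rw [map_smul]
    rw [← algebraMap_smul ℂ Δt ((-Complex.I) • φ M), Complex.coe_algebraMap,
      smul_smul, mul_comm]
  have hop : χ = (exp (Δt • ((-Complex.I) • a)) * exp (Δt • ((-Complex.I) • b))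
      - exp (Δt • ((-Complex.I) • (a + b)))) ψ0 := by
    apply WithLp.ofLp_injective 2
    rw [hχ]
    have e1 : ∀ (M : Matrix (Fin d) (Fin d) ℂ) (v : EuclideanSpace ℂ (Fin d)),
        (φ M v).ofLp = M.mulVec v.ofLp := fun M v => rfl
    rw [ContinuousLinearMap.sub_apply, WithLp.ofLp_sub]
    rw [← e1 (mexp ((-Complex.I * Δt) • H₀) * mexp ((-Complex.I * Δt) • H₁)),
      ← e1 (mexp ((-Complex.I * Δt) • (H₀ + H₁)))]
    rw [map_mul, hexp_eq, hexp_eq, hexp_eq, map_add]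
  have hcomm : l2opNorm (H₀ * H₁ - H₁ * H₀) = ‖a * b - b * a‖ := by
    rw [l2opNorm]
    congr 1
    rw [map_sub, map_mul, map_mul]
  rw [hop, hcomm]
  calc ‖(exp (Δt • ((-Complex.I) • a)) * exp (Δt • ((-Complex.I) • b))
      - exp (Δt • ((-Complex.I) • (a + b)))) ψ0‖
      ≤ ‖exp (Δt • ((-Complex.I) • a)) * exp (Δt • ((-Complex.I) • b))
      - exp (Δt • ((-Complex.I) • (a + b)))‖ * ‖ψ0‖ :=
        ContinuousLinearMap.le_opNorm _ _
    _ = ‖exp (Δt • ((-Complex.I) • a)) * exp (Δt • ((-Complex.I) • b))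
      - exp (Δt • ((-Complex.I) • (a + b)))‖ := by rw [hψ0, mul_one]
    _ ≤ Δt ^ 2 / 2 * ‖a * b - b * a‖ := trotter_op a b ha hb Δt hΔt
end
end

section
/- Let H₁,…,H_K be Hermitian matrices in ℂ^{d×d}, ψ(0) a unit vector, and χ = exp(-iΔtH₁)···exp(-iΔtH_K)ψ(0) - exp(-iΔt(H₁+···+H_K))ψ(0). Then ‖χ‖ ≤ (Δt²/2) · Σ_{1 ≤ j < k ≤ K} ‖[H_j, H_k]‖. -/
noncomputable section

open scoped BigOperators

section AbstractTrotter

open NormedSpace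

set_option linter.unusedSectionVars false
set_option maxHeartbeats 1000000

variable {A : Type*} [NormedRing A] [StarRing A] [CStarRing A] [NormedAlgebra ℝ A]
  [CompleteSpace A] [ContinuousStar A] [StarModule ℝ A]

private lemma tro_norm_one_le : ‖(1 : A)‖ ≤ 1 := by
  have h := CStarRing.norm_star_mul_self (x := (1 : A)); simp at h
  nlinarith [norm_nonneg (1 : A)]

private lemma tro_norm_exp_skew_le_one {a : A} (ha : star a = -a) : ‖exp a‖ ≤ 1 := by
  have h1 : star (exp a) * exp a = 1 := by
    letI : NormedAlgebra ℚ A := .restrictScalars ℚ ℝ A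
    rw [star_exp, ha, ← exp_add_of_commute (Commute.neg_left (Commute.refl a))]; simp
  have h2 := CStarRing.norm_star_mul_self (x := exp a)
  rw [h1] at h2
  nlinarith [norm_nonneg (exp a), tro_norm_one_le (A := A)]

private lemma tro_skew_smul {a : A} (ha : star a = -a) (t : ℝ) : star (t • a) = -(t • a) := by
  rw [star_smul, ha, star_trivial, smul_neg]

private lemma tro_exp_smul_comm (b : A) (s : ℝ) : b * exp (s • b) = exp (s • b) * b :=
  (((Commute.refl b).smul_right s).exp_right).eq

private lemma tro_sandwich {a b : A} (ha : ‖a‖ ≤ 1) (hb : ‖b‖ ≤ 1) (x : A) :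
    ‖a * x * b‖ ≤ ‖x‖ := by
  have h1 := norm_mul_le (a * x) b
  have h2 := norm_mul_le a x
  have h3 := norm_nonneg x
  have h4 := norm_nonneg (a * x)
  have h5 := norm_nonneg b
  have h6 := norm_nonneg a
  nlinarith

private lemma tro_comm_exp_bound {a b : A} (hb : star b = -b) {t : ℝ} (ht : 0 ≤ t) :
    ‖a * exp (t • b) - exp (t • b) * a‖ ≤ t * ‖a * b - b * a‖ := by
  set C := ‖a * b - b * a‖ with hC
  set h : ℝ → A := fun s => exp (s • b) * a * exp ((t - s) • b) with hh
  have hderiv : ∀ s : ℝ, HasDerivAt h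
      (exp (s • b) * (b * a - a * b) * exp ((t - s) • b)) s := by
    intro s
    have d1 : HasDerivAt (fun s : ℝ => exp (s • b) * a) (exp (s • b) * b * a) s :=
      (hasDerivAt_exp_smul_const b s).mul_const a
    have du : HasDerivAt (fun s : ℝ => t - s) (-1) s := by
      simpa using (hasDerivAt_id s).const_sub t
    have d2 : HasDerivAt (fun s : ℝ => exp ((t - s) • b))
        ((-1 : ℝ) • (exp ((t - s) • b) * b)) s :=
      (hasDerivAt_exp_smul_const b (t - s)).scomp s du
    have hd := d1.mul d2
    convert hd using 1
    · rfl
    have hc := tro_exp_smul_comm b (t - s)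
    simp only [neg_one_smul, mul_neg]
    rw [← hc]
    noncomm_ring
  have hbound : ∀ s ∈ Set.Ico (0:ℝ) t,
      ‖exp (s • b) * (b * a - a * b) * exp ((t - s) • b)‖ ≤ C := by
    intro s hs
    have h1 : ‖exp (s • b)‖ ≤ 1 := tro_norm_exp_skew_le_one (tro_skew_smul hb s)
    have h2 : ‖exp ((t - s) • b)‖ ≤ 1 := tro_norm_exp_skew_le_one (tro_skew_smul hb (t - s))
    calc ‖exp (s • b) * (b * a - a * b) * exp ((t - s) • b)‖
        ≤ ‖b * a - a * b‖ := tro_sandwich h1 h2 _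
      _ = C := norm_sub_rev _ _
  have key := norm_image_sub_le_of_norm_deriv_le_segment'
    (f := h) (f' := fun s => exp (s • b) * (b * a - a * b) * exp ((t - s) • b))
    (C := C) (fun s _ => (hderiv s).hasDerivWithinAt) hbound t (Set.right_mem_Icc.mpr ht)
  have e0 : h 0 = a * exp (t • b) := by simp [hh]
  have e1 : h t = exp (t • b) * a := by simp [hh]
  rw [e0, e1] at key
  calc ‖a * exp (t • b) - exp (t • b) * a‖
      = ‖exp (t • b) * a - a * exp (t • b)‖ := norm_sub_rev _ _
    _ ≤ C * (t - 0) := key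
    _ = t * C := by ring

private lemma tro_trotter2 {a b : A} (ha : star a = -a) (hb : star b = -b) :
    ‖exp a * exp b - exp (a + b)‖ ≤ ‖a * b - b * a‖ / 2 := by
  set c := a + b with hcdef
  have hc : star c = -c := by rw [hcdef, star_add, ha, hb, neg_add]
  set g : ℝ → A := fun t => exp (t • a) * exp (t • b) * exp ((1 - t) • c) with hg
  set g' : ℝ → A := fun t =>
    exp (t • a) * (a * exp (t • b) - exp (t • b) * a) * exp ((1 - t) • c) with hg'
  have hderiv : ∀ t : ℝ, HasDerivAt g (g' t) t := by
    intro t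
    have d1 : HasDerivAt (fun t : ℝ => exp (t • a)) (exp (t • a) * a) t :=
      hasDerivAt_exp_smul_const a t
    have d2 : HasDerivAt (fun t : ℝ => exp (t • b)) (exp (t • b) * b) t :=
      hasDerivAt_exp_smul_const b t
    have du : HasDerivAt (fun t : ℝ => 1 - t) (-1) t := by
      simpa using (hasDerivAt_id t).const_sub 1
    have d3 : HasDerivAt (fun t : ℝ => exp ((1 - t) • c))
        ((-1 : ℝ) • (exp ((1 - t) • c) * c)) t :=
      (hasDerivAt_exp_smul_const c (1 - t)).scomp t du
    have hd := (d1.mul d2).mul d3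
    convert hd using 1
    · rfl
    have hcc := tro_exp_smul_comm c (1 - t)
    simp only [hg', neg_one_smul, mul_neg, Pi.mul_apply]
    rw [← hcc, hcdef]
    noncomm_ring
  have hbound : ∀ t ∈ Set.Icc (0:ℝ) 1, ‖g' t‖ ≤ t * ‖a * b - b * a‖ := by
    intro t ht
    have h1 : ‖exp (t • a)‖ ≤ 1 := tro_norm_exp_skew_le_one (tro_skew_smul ha t)
    have h3 : ‖exp ((1 - t) • c)‖ ≤ 1 := tro_norm_exp_skew_le_one (tro_skew_smul hc (1 - t))
    calc ‖g' t‖ ≤ ‖a * exp (t • b) - exp (t • b) * a‖ := tro_sandwich h1 h3 _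
      _ ≤ t * ‖a * b - b * a‖ := tro_comm_exp_bound hb ht.1
  have hcont : Continuous g' := by
    letI : NormedAlgebra ℚ A := .restrictScalars ℚ ℝ A
    have c1 : Continuous fun t : ℝ => exp (t • a) :=
      exp_continuous.comp (continuous_id.smul continuous_const)
    have c2 : Continuous fun t : ℝ => exp (t • b) :=
      exp_continuous.comp (continuous_id.smul continuous_const)
    have c3 : Continuous fun t : ℝ => exp ((1 - t) • c) :=
      exp_continuous.comp (((continuous_const.sub continuous_id).smul continuous_const))
    exact (c1.mul ((continuous_const.mul c2).sub (c2.mul continuous_const))).mul c3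
  have hint : IntervalIntegrable g' MeasureTheory.volume 0 1 := hcont.intervalIntegrable _ _
  have hftc : (∫ t in (0:ℝ)..1, g' t) = g 1 - g 0 :=
    intervalIntegral.integral_eq_sub_of_hasDerivAt (fun t _ => hderiv t) hint
  have hg1 : g 1 = exp a * exp b := by simp [hg]
  have hg0 : g 0 = exp c := by simp [hg]
  have hnorm : ‖∫ t in (0:ℝ)..1, g' t‖ ≤ ∫ t in (0:ℝ)..1, t * ‖a * b - b * a‖ := by
    refine (intervalIntegral.norm_integral_le_integral_norm (μ := MeasureTheory.volume)
      zero_le_one).trans ?_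
    exact intervalIntegral.integral_mono_on zero_le_one (hcont.norm.intervalIntegrable _ _)
      ((continuous_id.mul continuous_const).intervalIntegrable _ _) hbound
  have hval : (∫ t in (0:ℝ)..1, t * ‖a * b - b * a‖) = ‖a * b - b * a‖ / 2 := by
    rw [intervalIntegral.integral_mul_const, integral_id]; ring
  rw [hftc, hg1, hg0, hval] at hnorm
  exact hnorm

private lemma tro_key : ∀ {K : ℕ} (a : Fin K → A), (∀ j, star (a j) = -(a j)) →
    ‖(List.ofFn fun j => exp (a j)).prod - exp (∑ j, a j)‖ ≤
      ∑ p ∈ Finset.univ.filter (fun p : Fin K × Fin K => p.1 < p.2),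
        ‖a p.1 * a p.2 - a p.2 * a p.1‖ / 2 := by
  intro K
  induction K with
  | zero => intro a _; simp
  | succ K ih =>
    intro a ha
    set a' : Fin K → A := fun j => a j.succ with ha'
    set B : A := ∑ j, a' j with hB
    set Q : A := (List.ofFn fun j => exp (a' j)).prod with hQ
    have hBskew : star B = -B := by
      rw [hB, star_sum]
      simp only [ha']
      rw [← Finset.sum_neg_distrib]
      exact Finset.sum_congr rfl fun j _ => ha j.succ
    have hsum : ∑ j, a j = a 0 + B := Fin.sum_univ_succ a
    have hprod : (List.ofFn fun j => exp (a j)).prod = exp (a 0) * Q := by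
      rw [List.ofFn_succ, List.prod_cons]
    have split : exp (a 0) * Q - exp (a 0 + B) =
        exp (a 0) * (Q - exp B) + (exp (a 0) * exp B - exp (a 0 + B)) := by
      noncomm_ring
    have hcomm : a 0 * B - B * a 0 = ∑ j, (a 0 * a' j - a' j * a 0) := by
      rw [hB, Finset.mul_sum, Finset.sum_mul, ← Finset.sum_sub_distrib]
    have hcommle : ‖a 0 * B - B * a 0‖ ≤ ∑ j, ‖a 0 * a' j - a' j * a 0‖ := by
      rw [hcomm]; exact norm_sum_le _ _
    have h1 : ‖exp (a 0) * (Q - exp B)‖ ≤ ‖Q - exp B‖ := by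
      have he := tro_norm_exp_skew_le_one (ha 0)
      have := norm_mul_le (exp (a 0)) (Q - exp B)
      nlinarith [norm_nonneg (Q - exp B)]
    have h2 := tro_trotter2 (ha 0) hBskew
    have hih := ih a' (fun j => ha j.succ)
    have hsplitRHS : ∑ p ∈ Finset.univ.filter (fun p : Fin (K+1) × Fin (K+1) => p.1 < p.2),
          ‖a p.1 * a p.2 - a p.2 * a p.1‖ / 2 =
        (∑ j : Fin K, ‖a 0 * a' j - a' j * a 0‖ / 2) +
        ∑ p ∈ Finset.univ.filter (fun p : Fin K × Fin K => p.1 < p.2),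
          ‖a' p.1 * a' p.2 - a' p.2 * a' p.1‖ / 2 := by
      rw [Finset.sum_filter, Finset.sum_filter, Fintype.sum_prod_type, Fintype.sum_prod_type]
      rw [Fin.sum_univ_succ]
      simp [Fin.sum_univ_succ, Fin.succ_lt_succ_iff, Fin.succ_pos, ha']
    calc ‖(List.ofFn fun j => exp (a j)).prod - exp (∑ j, a j)‖
        = ‖exp (a 0) * (Q - exp B) + (exp (a 0) * exp B - exp (a 0 + B))‖ := by
          rw [hprod, hsum, split]
      _ ≤ ‖exp (a 0) * (Q - exp B)‖ + ‖exp (a 0) * exp B - exp (a 0 + B)‖ :=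
          norm_add_le _ _
      _ ≤ ‖Q - exp B‖ + ‖a 0 * B - B * a 0‖ / 2 := add_le_add h1 h2
      _ ≤ (∑ p ∈ Finset.univ.filter (fun p : Fin K × Fin K => p.1 < p.2),
            ‖a' p.1 * a' p.2 - a' p.2 * a' p.1‖ / 2) +
          (∑ j, ‖a 0 * a' j - a' j * a 0‖) / 2 := by
          apply add_le_add hih
          linarith
      _ = _ := by rw [hsplitRHS, Finset.sum_div]; ring

end AbstractTrotter

theorem multiple_trotter_splitting_error_bound {d K : ℕ}
    (H : Fin K → Matrix (Fin d) (Fin d) ℂ) (hherm : ∀ j, (H j).IsHermitian)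
    (ψ0 : EuclideanSpace ℂ (Fin d)) (hψ0 : ‖ψ0‖ = 1)
    (Δt : ℝ) (hΔt : 0 ≤ Δt)
    (χ : EuclideanSpace ℂ (Fin d))
    (hχ : χ = ((List.ofFn fun j : Fin K => mexp ((-Complex.I * Δt) • H j)).prod).mulVec ψ0
            - (mexp ((-Complex.I * Δt) • ∑ j, H j)).mulVec ψ0) :
    ‖χ‖ ≤ Δt ^ 2 / 2 *
      ∑ p ∈ Finset.univ.filter (fun p : Fin K × Fin K => p.1 < p.2),
        l2opNorm (H p.1 * H p.2 - H p.2 * H p.1) := by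
  classical
  open scoped Matrix.Norms.L2Operator in
  set c : ℂ := -Complex.I * Δt with hc
  set a : Fin K → Matrix (Fin d) (Fin d) ℂ := fun j => c • H j with ha
  have hcstar : star c = -c := by
    simp [hc, Complex.star_def, map_mul, Complex.conj_ofReal]
  have hskew : ∀ j, star (a j) = -(a j) := by
    intro j
    rw [ha]
    simp only [star_smul, hcstar]
    rw [Matrix.star_eq_conjTranspose, (hherm j).eq, neg_smul]
  -- the two matrices
  set P : Matrix (Fin d) (Fin d) ℂ := (List.ofFn fun j : Fin K => mexp (a j)).prod with hP
  set S : Matrix (Fin d) (Fin d) ℂ := mexp (c • ∑ j, H j) with hS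
  have hexp : ∀ M : Matrix (Fin d) (Fin d) ℂ, mexp M = NormedSpace.exp M := by
    intro M
    rfl
  have hsum : c • ∑ j, H j = ∑ j, a j := by rw [Finset.smul_sum]
  have hkey := tro_key a hskew
  have hPS : ‖P - S‖ ≤ ∑ p ∈ Finset.univ.filter (fun p : Fin K × Fin K => p.1 < p.2),
      ‖a p.1 * a p.2 - a p.2 * a p.1‖ / 2 := by
    have e1 : P = (List.ofFn fun j : Fin K => NormedSpace.exp (a j)).prod := by
      rw [hP]
      simp only [hexp]
    have e2 : S = NormedSpace.exp (∑ j, a j) := by rw [hS, hexp, hsum]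
    rw [e1, e2]
    exact hkey
  -- commutator norms
  have hnormc : ‖c‖ = Δt := by
    rw [hc]
    simp [norm_mul, abs_of_nonneg hΔt]
  have hcommnorm : ∀ p : Fin K × Fin K,
      ‖a p.1 * a p.2 - a p.2 * a p.1‖ =
        Δt ^ 2 * l2opNorm (H p.1 * H p.2 - H p.2 * H p.1) := by
    intro p
    have e : a p.1 * a p.2 - a p.2 * a p.1 =
        (c * c) • (H p.1 * H p.2 - H p.2 * H p.1) := by
      rw [ha]
      simp only [smul_mul_smul_comm, smul_sub]
    rw [e, norm_smul, norm_mul, hnormc]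
    have : l2opNorm (H p.1 * H p.2 - H p.2 * H p.1) =
        ‖H p.1 * H p.2 - H p.2 * H p.1‖ := rfl
    rw [this]
    ring
  -- from vectors to operator norm
  have hχ' : χ.ofLp = (P - S).mulVec ψ0 := by
    rw [hχ]
    have : (P - S).mulVec ψ0 = P.mulVec ψ0 - S.mulVec ψ0 := Matrix.sub_mulVec P S ψ0
    rw [this, hP, hS, hsum, ← Finset.smul_sum]
  have hχnorm : ‖χ‖ ≤ ‖P - S‖ := by
    have hCLM : χ = Matrix.toEuclideanCLM (𝕜 := ℂ) (P - S) ψ0 := WithLp.ofLp_injective 2 hχ'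
    rw [hCLM]
    calc ‖Matrix.toEuclideanCLM (𝕜 := ℂ) (P - S) ψ0‖
        ≤ ‖Matrix.toEuclideanCLM (𝕜 := ℂ) (P - S)‖ * ‖ψ0‖ :=
          (Matrix.toEuclideanCLM (𝕜 := ℂ) (P - S)).le_opNorm ψ0
      _ = ‖P - S‖ := by rw [hψ0, mul_one]; rfl
  calc ‖χ‖ ≤ ‖P - S‖ := hχnorm
    _ ≤ ∑ p ∈ Finset.univ.filter (fun p : Fin K × Fin K => p.1 < p.2),
        ‖a p.1 * a p.2 - a p.2 * a p.1‖ / 2 := hPS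
    _ = Δt ^ 2 / 2 * ∑ p ∈ Finset.univ.filter (fun p : Fin K × Fin K => p.1 < p.2),
        l2opNorm (H p.1 * H p.2 - H p.2 * H p.1) := by
        rw [Finset.mul_sum]
        refine Finset.sum_congr rfl fun p _ => ?_
        rw [hcommnorm p]
        ring
end
end

section
/- Let H₀, H₁ be Hermitian matrices, δH a Hermitian random matrix with ‖E[δH²]‖ ≤ Λ, and ψ(0) a unit vector. Define χ(Δt) = exp(-iΔtH₀)exp(-iΔt(H₁+δH))ψ(0) - exp(-iΔt(H₀+H₁))ψ(0). Then E[⟨χ(Δt),χ(Δt)⟩] ≤ 2ΛΔt² + Δt⁴·‖[H₀,H₁]‖². -/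
noncomputable section

open scoped BigOperators

set_option synthInstance.maxHeartbeats 1000000
set_option maxHeartbeats 1000000

open NormedSpace

namespace OneStepAux
variable {E : Type*} [NormedAddCommGroup E] [InnerProductSpace ℂ E] [CompleteSpace E]

instance instQAlgCLM : NormedAlgebra ℚ (E →L[ℂ] E) := NormedAlgebra.restrictScalars ℚ ℂ _

abbrev ρ : (E →L[ℂ] E) →L[ℝ] (E →L[ℝ] E) := ContinuousLinearMap.restrictScalarsL ℂ E E ℝ ℝ

lemma skew_exp_isometry (S : E →L[ℂ] E) (hS : star S = -S) (v : E) :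
    ‖exp S v‖ = ‖v‖ := by
  have h1 : star (exp S) * exp S = 1 := by
    rw [star_exp, hS, ← exp_add_of_commute ((Commute.refl S).neg_left), neg_add_cancel, exp_zero]
  have h2 : inner ℂ (exp S v) (exp S v) = inner ℂ v v := by
    rw [← ContinuousLinearMap.adjoint_inner_left (exp S) v (exp S v),
      ← ContinuousLinearMap.star_eq_adjoint, ← ContinuousLinearMap.mul_apply, h1,
      ContinuousLinearMap.one_apply]
  have h3 := congrArg (fun z => RCLike.re (K := ℂ) z) h2
  simp only [inner_self_eq_norm_sq (𝕜 := ℂ)] at h3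
  nlinarith [norm_nonneg (exp S v), norm_nonneg v]

lemma skew_smul (S : E →L[ℂ] E) (hS : star S = -S) (r : ℝ) : star (r • S) = -(r • S) := by
  rw [star_smul, star_trivial, hS, smul_neg]

lemma skew_exp_isometry' (S : E →L[ℂ] E) (hS : star S = -S) (r : ℝ) (v : E) :
    ‖exp (r • S) v‖ = ‖v‖ :=
  skew_exp_isometry _ (skew_smul S hS r) v

lemma cont_exp_smul (M : E →L[ℂ] E) : Continuous fun s : ℝ => exp (s • M) :=
  exp_continuous.comp (continuous_id.smul continuous_const)

lemma cont_exp_smul' (M : E →L[ℂ] E) (t : ℝ) : Continuous fun s : ℝ => exp ((t - s) • M) :=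
  exp_continuous.comp ((continuous_const.sub continuous_id).smul continuous_const)

lemma exp_smul_mul_comm (M : E →L[ℂ] E) (s : ℝ) : exp (s • M) * M = M * exp (s • M) :=
  (((Commute.refl M).smul_left s).exp_left).eq

lemma exp_smul_apply_comm (A : E →L[ℂ] E) (c : ℝ) (x : E) :
    exp (c • A) (A x) = A (exp (c • A) x) := by
  have h : (exp (c • A) * A) x = (A * exp (c • A)) x := by rw [exp_smul_mul_comm]
  simpa [ContinuousLinearMap.mul_apply] using h

lemma hasDerivAt_exp_apply_gen (A : E →L[ℂ] E) (g : ℝ → E) (g' : E) (s : ℝ)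
    (hg : HasDerivAt g g' s) :
    HasDerivAt (fun s : ℝ => exp (s • A) (g s)) (exp (s • A) (A (g s) + g')) s := by
  have h := (ρ.hasFDerivAt.comp_hasDerivAt s (hasDerivAt_exp_smul_const A s)).clm_apply hg
  have he : (ρ (E := E)) (exp (s • A) * A) (g s) + (ρ (E := E)) (exp (s • A)) g'
      = exp (s • A) (A (g s) + g') := by
    show (exp (s • A) * A) (g s) + exp (s • A) g' = _
    rw [map_add, ContinuousLinearMap.mul_apply, exp_smul_apply_comm, ← exp_smul_apply_comm]
  exact he ▸ h

lemma hasDerivAt_exp_apply (B : E →L[ℂ] E) (v : E) (s : ℝ) :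
    HasDerivAt (fun s : ℝ => exp (s • B) v) (B (exp (s • B) v)) s := by
  have := hasDerivAt_exp_apply_gen B (fun _ => v) 0 s (hasDerivAt_const s v)
  simpa [exp_smul_apply_comm] using this

lemma hasDerivAt_exp_apply' (A : E →L[ℂ] E) (t : ℝ) (u : ℝ → E) (u' : E) (s : ℝ)
    (hu : HasDerivAt u u' s) :
    HasDerivAt (fun s : ℝ => exp ((t - s) • A) (u s))
      (exp ((t - s) • A) (u' - A (u s))) s := by
  have hinner : HasDerivAt (fun x : ℝ => t - x) (-1 : ℝ) s := by
    simpa using (hasDerivAt_id s).const_sub t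
  have h1 : HasDerivAt (fun s : ℝ => exp ((t - s) • A))
      ((-1 : ℝ) • (exp ((t - s) • A) * A)) s :=
    (hasDerivAt_exp_smul_const A (t - s)).scomp s hinner
  have h2 := (ρ.hasFDerivAt.comp_hasDerivAt s h1).clm_apply hu
  have he : (ρ (E := E)) ((-1 : ℝ) • (exp ((t - s) • A) * A)) (u s)
        + (ρ (E := E)) (exp ((t - s) • A)) u'
      = exp ((t - s) • A) (u' - A (u s)) := by
    show ((-1 : ℝ) • (exp ((t - s) • A) * A)) (u s) + exp ((t - s) • A) u' = _
    rw [ContinuousLinearMap.smul_apply, ContinuousLinearMap.mul_apply, map_sub]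
    module
  exact he ▸ h2

lemma duhamel (A B : E →L[ℂ] E) (v : E) (t : ℝ) :
    exp (t • B) v - exp (t • A) v =
      ∫ s in (0:ℝ)..t, exp ((t - s) • A) ((B - A) (exp (s • B) v)) := by
  have hcont : Continuous fun s : ℝ => exp ((t - s) • A) ((B - A) (exp (s • B) v)) :=
    (cont_exp_smul' A t).clm_apply
      ((B - A).continuous.comp ((cont_exp_smul B).clm_apply continuous_const))
  have key : ∀ s ∈ Set.uIcc (0:ℝ) t,
      HasDerivAt (fun s : ℝ => exp ((t - s) • A) (exp (s • B) v))
        (exp ((t - s) • A) ((B - A) (exp (s • B) v))) s := by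
    intro s _
    have := hasDerivAt_exp_apply' A t _ _ s (hasDerivAt_exp_apply B v s)
    simpa [ContinuousLinearMap.sub_apply] using this
  have := intervalIntegral.integral_eq_sub_of_hasDerivAt key (hcont.intervalIntegrable 0 t)
  rw [this]
  simp

lemma duhamel_norm_le (A B : E →L[ℂ] E) (hA : star A = -A) (v : E) (t : ℝ) (ht : 0 ≤ t) :
    ‖exp (t • B) v - exp (t • A) v‖ ≤
      ∫ s in (0:ℝ)..t, ‖(B - A) (exp (s • B) v)‖ := by
  rw [duhamel A B v t]
  refine (intervalIntegral.norm_integral_le_integral_norm ht).trans ?_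
  refine le_of_eq (intervalIntegral.integral_congr fun s _ => ?_)
  exact skew_exp_isometry' A hA (t - s) _

lemma comm_exp_apply_le (A B : E →L[ℂ] E) (hA : star A = -A) (s : ℝ) (hs : 0 ≤ s) (x : E) :
    ‖exp (s • A) (B x) - B (exp (s • A) x)‖ ≤ s * ‖A * B - B * A‖ * ‖x‖ := by
  have hder : ∀ u ∈ Set.uIcc (0:ℝ) s,
      HasDerivAt (fun u : ℝ => exp (u • A) (B (exp ((s - u) • A) x)))
        (exp (u • A) ((A * B - B * A) (exp ((s - u) • A) x))) u := by
    intro u _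
    have hin : HasDerivAt (fun u : ℝ => B (exp ((s - u) • A) x))
        (B (exp ((s - u) • A) (0 - A x))) u := by
      exact (B.restrictScalars ℝ).hasFDerivAt.comp_hasDerivAt u
        (hasDerivAt_exp_apply' A s (fun _ => x) 0 u (hasDerivAt_const u x))
    have := hasDerivAt_exp_apply_gen A _ _ u hin
    have he : exp (u • A) (A (B (exp ((s - u) • A) x)) + B (exp ((s - u) • A) (0 - A x)))
        = exp (u • A) ((A * B - B * A) (exp ((s - u) • A) x)) := by
      congr 1
      rw [zero_sub, map_neg, map_neg, exp_smul_apply_comm A (s - u),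
        ContinuousLinearMap.sub_apply, ContinuousLinearMap.mul_apply,
        ContinuousLinearMap.mul_apply]
      abel
    exact he ▸ this
  have hcont : Continuous fun u : ℝ =>
      exp (u • A) ((A * B - B * A) (exp ((s - u) • A) x)) :=
    (cont_exp_smul A).clm_apply
      ((A * B - B * A).continuous.comp ((cont_exp_smul' A s).clm_apply continuous_const))
  have hftc := intervalIntegral.integral_eq_sub_of_hasDerivAt hder
    (hcont.intervalIntegrable 0 s)
  have heq : exp (s • A) (B x) - B (exp (s • A) x) =
      ∫ u in (0:ℝ)..s, exp (u • A) ((A * B - B * A) (exp ((s - u) • A) x)) := by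
    rw [hftc]; simp
  rw [heq]
  calc ‖∫ u in (0:ℝ)..s, exp (u • A) ((A * B - B * A) (exp ((s - u) • A) x))‖
      ≤ ∫ u in (0:ℝ)..s, ‖exp (u • A) ((A * B - B * A) (exp ((s - u) • A) x))‖ :=
        intervalIntegral.norm_integral_le_integral_norm hs
    _ ≤ ∫ u in (0:ℝ)..s, ‖A * B - B * A‖ * ‖x‖ := by
        refine intervalIntegral.integral_mono_on hs ?_ (intervalIntegrable_const) ?_
        · exact (hcont.norm).intervalIntegrable 0 s
        · intro u hu
          rw [skew_exp_isometry' A hA u]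
          calc ‖(A * B - B * A) (exp ((s - u) • A) x)‖
              ≤ ‖A * B - B * A‖ * ‖exp ((s - u) • A) x‖ :=
                ContinuousLinearMap.le_opNorm _ _
            _ = ‖A * B - B * A‖ * ‖x‖ := by rw [skew_exp_isometry' A hA (s - u) x]
    _ = s * (‖A * B - B * A‖ * ‖x‖) := by
        rw [intervalIntegral.integral_const, sub_zero, smul_eq_mul]
    _ = s * ‖A * B - B * A‖ * ‖x‖ := by ring

lemma trotter_bias_le (A B : E →L[ℂ] E) (hA : star A = -A) (hB : star B = -B)
    (v : E) (t : ℝ) (ht : 0 ≤ t) :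
    ‖exp (t • A) (exp (t • B) v) - exp (t • (A + B)) v‖ ≤
      t ^ 2 / 2 * ‖A * B - B * A‖ * ‖v‖ := by
  have hC : star (A + B) = -(A + B) := by rw [star_add, hA, hB]; abel
  have hder : ∀ s ∈ Set.uIcc (0:ℝ) t,
      HasDerivAt (fun s : ℝ => exp ((t - s) • (A + B)) (exp (s • A) (exp (s • B) v)))
        (exp ((t - s) • (A + B))
          (exp (s • A) (B (exp (s • B) v)) - B (exp (s • A) (exp (s • B) v)))) s := by
    intro s _
    have hin : HasDerivAt (fun s : ℝ => exp (s • A) (exp (s • B) v))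
        (exp (s • A) (A (exp (s • B) v) + B (exp (s • B) v))) s :=
      hasDerivAt_exp_apply_gen A _ _ s (hasDerivAt_exp_apply B v s)
    have := hasDerivAt_exp_apply' (A + B) t _ _ s hin
    have he : exp (s • A) (A (exp (s • B) v) + B (exp (s • B) v))
          - (A + B) (exp (s • A) (exp (s • B) v))
        = exp (s • A) (B (exp (s • B) v)) - B (exp (s • A) (exp (s • B) v)) := by
      rw [map_add, ContinuousLinearMap.add_apply, exp_smul_apply_comm A s]
      abel
    rw [← he]
    exact this
  have hcont : Continuous fun s : ℝ => exp ((t - s) • (A + B))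
      (exp (s • A) (B (exp (s • B) v)) - B (exp (s • A) (exp (s • B) v))) := by
    have c1 : Continuous fun s : ℝ => exp (s • B) v :=
      (cont_exp_smul B).clm_apply continuous_const
    have c2 : Continuous fun s : ℝ => exp (s • A) (B (exp (s • B) v)) :=
      (cont_exp_smul A).clm_apply (B.continuous.comp c1)
    have c3 : Continuous fun s : ℝ => B (exp (s • A) (exp (s • B) v)) :=
      B.continuous.comp ((cont_exp_smul A).clm_apply c1)
    exact (cont_exp_smul' (A + B) t).clm_apply (c2.sub c3)
  have hftc := intervalIntegral.integral_eq_sub_of_hasDerivAt hder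
    (hcont.intervalIntegrable 0 t)
  have heq : exp (t • A) (exp (t • B) v) - exp (t • (A + B)) v =
      ∫ s in (0:ℝ)..t, exp ((t - s) • (A + B))
        (exp (s • A) (B (exp (s • B) v)) - B (exp (s • A) (exp (s • B) v))) := by
    rw [hftc]; simp
  rw [heq]
  calc ‖∫ s in (0:ℝ)..t, exp ((t - s) • (A + B))
        (exp (s • A) (B (exp (s • B) v)) - B (exp (s • A) (exp (s • B) v)))‖
      ≤ ∫ s in (0:ℝ)..t, ‖exp ((t - s) • (A + B))
          (exp (s • A) (B (exp (s • B) v)) - B (exp (s • A) (exp (s • B) v)))‖ :=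
        intervalIntegral.norm_integral_le_integral_norm ht
    _ ≤ ∫ s in (0:ℝ)..t, s * ‖A * B - B * A‖ * ‖v‖ := by
        refine intervalIntegral.integral_mono_on ht ((hcont.norm).intervalIntegrable 0 t)
          ((continuous_id.mul continuous_const |>.mul continuous_const).intervalIntegrable 0 t) ?_
        intro s hsmem
        rw [skew_exp_isometry' (A + B) hC (t - s)]
        calc ‖exp (s • A) (B (exp (s • B) v)) - B (exp (s • A) (exp (s • B) v))‖
            ≤ s * ‖A * B - B * A‖ * ‖exp (s • B) v‖ :=
              comm_exp_apply_le A B hA s hsmem.1 (exp (s • B) v)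
          _ = s * ‖A * B - B * A‖ * ‖v‖ := by rw [skew_exp_isometry' B hB s v]
    _ = t ^ 2 / 2 * ‖A * B - B * A‖ * ‖v‖ := by
        rw [intervalIntegral.integral_mul_const, intervalIntegral.integral_mul_const,
          integral_id]
        ring

lemma sq_integral_le (f : ℝ → ℝ) (hf : Continuous f) (t : ℝ) (ht : 0 ≤ t) :
    (∫ s in (0:ℝ)..t, f s) ^ 2 ≤ t * ∫ s in (0:ℝ)..t, (f s) ^ 2 := by
  set I1 := ∫ s in (0:ℝ)..t, f s with hI1
  set I2 := ∫ s in (0:ℝ)..t, (f s) ^ 2 with hI2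
  have key : (0:ℝ) ≤ ∫ s in (0:ℝ)..t, (t * f s - I1) ^ 2 :=
    intervalIntegral.integral_nonneg ht (fun u _ => sq_nonneg _)
  have hexp : (∫ s in (0:ℝ)..t, (t * f s - I1) ^ 2)
      = t ^ 2 * I2 - 2 * t * I1 * I1 + I1 ^ 2 * t := by
    have hfi : IntervalIntegrable f MeasureTheory.volume 0 t := hf.intervalIntegrable 0 t
    have hfi2 : IntervalIntegrable (fun s => (f s) ^ 2) MeasureTheory.volume 0 t :=
      (hf.pow 2).intervalIntegrable 0 t
    have : (fun s => (t * f s - I1) ^ 2)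
        = fun s => t ^ 2 * (f s) ^ 2 - 2 * t * I1 * f s + I1 ^ 2 := by
      funext s; ring
    rw [this]
    rw [intervalIntegral.integral_add (((hfi2.const_mul _).sub (hfi.const_mul _)))
      intervalIntegrable_const,
      intervalIntegral.integral_sub (hfi2.const_mul _) (hfi.const_mul _),
      intervalIntegral.integral_const_mul, intervalIntegral.integral_const_mul,
      intervalIntegral.integral_const]
    simp only [sub_zero, smul_eq_mul]
    ring
  rw [hexp] at key
  rcases eq_or_lt_of_le ht with h0 | h0
  · have : I1 = 0 := by rw [hI1, ← h0, intervalIntegral.integral_same]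
    rw [this, ← h0]
    simp
  · nlinarith [key, h0, mul_pos h0 h0]

end OneStepAux

open NormedSpace OneStepAux

theorem one_step_mse_bias_variance_bound {d : ℕ} {Ω : Type*} [Fintype Ω]
    (w : Ω → ℝ) (hw : ∀ ω, 0 ≤ w ω) (hwsum : ∑ ω, w ω = 1)
    (H₀ H₁ : Matrix (Fin d) (Fin d) ℂ) (hH₀ : H₀.IsHermitian) (hH₁ : H₁.IsHermitian)
    (δH : Ω → Matrix (Fin d) (Fin d) ℂ) (hδH : ∀ ω, (δH ω).IsHermitian)
    (Λ : ℝ) (hΛ : l2opNorm (∑ ω, (w ω : ℂ) • (δH ω) ^ 2) ≤ Λ)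
    (ψ0 : EuclideanSpace ℂ (Fin d)) (hψ0 : ‖ψ0‖ = 1)
    (Δt : ℝ) (hΔt : 0 ≤ Δt)
    (χ : Ω → EuclideanSpace ℂ (Fin d))
    (hχ : ∀ ω, χ ω =
      (mexp ((-Complex.I * Δt) • H₀) * mexp ((-Complex.I * Δt) • (H₁ + δH ω))).mulVec ψ0
      - (mexp ((-Complex.I * Δt) • (H₀ + H₁))).mulVec ψ0) :
    (∑ ω, w ω * (inner (𝕜 := ℂ) (χ ω) (χ ω)).re) ≤
      2 * Λ * Δt ^ 2 + Δt ^ 4 * (l2opNorm (H₀ * H₁ - H₁ * H₀)) ^ 2 := by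
  classical
  set Φ : Matrix (Fin d) (Fin d) ℂ ≃⋆ₐ[ℂ]
      (EuclideanSpace ℂ (Fin d) →L[ℂ] EuclideanSpace ℂ (Fin d)) :=
    Matrix.toEuclideanCLM (𝕜 := ℂ) with hΦdef
  have hΦc : Continuous Φ :=
    LinearMap.continuous_of_finiteDimensional
      { toFun := Φ, map_add' := fun a b => map_add Φ a b,
        map_smul' := fun c m => map_smul Φ c m }
  have hΦeq : ∃ e : Matrix (Fin d) (Fin d) ℂ ≃L[ℂ]
      (EuclideanSpace ℂ (Fin d) →L[ℂ] EuclideanSpace ℂ (Fin d)), ∀ x, e x = Φ x := by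
    refine ⟨LinearEquiv.toContinuousLinearEquiv
      { toFun := Φ, invFun := Φ.symm,
        map_add' := fun a b => map_add Φ a b,
        map_smul' := fun c m => map_smul Φ c m,
        left_inv := fun x => Φ.symm_apply_apply x,
        right_inv := fun x => Φ.apply_symm_apply x }, fun x => rfl⟩
  obtain ⟨e, he⟩ := hΦeq
  have hΦexp : ∀ M : Matrix (Fin d) (Fin d) ℂ, Φ (mexp M) = exp (Φ M) := by
    intro M
    rw [mexp, exp_eq_tsum (𝕂 := ℂ)]
    calc Φ (∑' (n : ℕ), ((n.factorial : ℂ))⁻¹ • M ^ n)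
        = e (∑' (n : ℕ), ((n.factorial : ℂ))⁻¹ • M ^ n) := (he _).symm
      _ = ∑' (n : ℕ), e (((n.factorial : ℂ))⁻¹ • M ^ n) := e.map_tsum
      _ = ∑' (n : ℕ), ((n.factorial : ℂ))⁻¹ • (Φ M) ^ n := by
          refine tsum_congr fun n => ?_
          rw [he, map_smul, map_pow]
      _ = exp (Φ M) := by rw [exp_eq_tsum (𝕂 := ℂ)]
      _ = exp (Φ M) := rfl
  have hmv : ∀ (M : Matrix (Fin d) (Fin d) ℂ) (x : EuclideanSpace ℂ (Fin d)),
      Φ M x = M.mulVec x := fun _ _ => rfl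
  set T₀ := Φ H₀ with hT₀
  set T₁ := Φ H₁ with hT₁
  set A := (-Complex.I) • T₀ with hA
  set B := (-Complex.I) • T₁ with hB
  set D : Ω → (EuclideanSpace ℂ (Fin d) →L[ℂ] EuclideanSpace ℂ (Fin d)) :=
    fun ω => Φ (δH ω) with hD
  set Dc : Ω → (EuclideanSpace ℂ (Fin d) →L[ℂ] EuclideanSpace ℂ (Fin d)) :=
    fun ω => (-Complex.I) • D ω with hDc
  -- skewness
  have hskew : ∀ (M : Matrix (Fin d) (Fin d) ℂ), M.IsHermitian →
      star ((-Complex.I) • Φ M) = -((-Complex.I) • Φ M) := by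
    intro M hM
    rw [star_smul, ← map_star]
    rw [Matrix.star_eq_conjTranspose, hM.eq]
    simp only [star_neg, Complex.star_def, Complex.conj_I]
    module
  have hAskew : star A = -A := hskew H₀ hH₀
  have hBskew : star B = -B := hskew H₁ hH₁
  have hDcskew : ∀ ω, star (Dc ω) = -(Dc ω) := fun ω => hskew (δH ω) (hδH ω)
  -- scalar smul translation
  have hsm : ∀ M : Matrix (Fin d) (Fin d) ℂ,
      Φ ((-Complex.I * Δt) • M) = Δt • ((-Complex.I) • Φ M) := by
    intro M
    rw [map_smul, ← algebraMap_smul ℂ Δt ((-Complex.I) • Φ M), Complex.coe_algebraMap,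
      smul_smul, mul_comm]
  -- rewrite χ
  have hχ' : ∀ ω, χ ω =
      exp (Δt • A) (exp (Δt • (B + Dc ω)) ψ0) - exp (Δt • (A + B)) ψ0 := by
    intro ω
    apply WithLp.ofLp_injective 2
    rw [hχ ω, WithLp.ofLp_sub]
    have e1 : (mexp ((-Complex.I * Δt) • H₀) * mexp ((-Complex.I * Δt) • (H₁ + δH ω))).mulVec ψ0
        = (exp (Δt • A) (exp (Δt • (B + Dc ω)) ψ0)).ofLp := by
      rw [← hmv, map_mul, ContinuousLinearMap.mul_apply, hΦexp, hΦexp, hsm, hsm]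
      rw [map_add, smul_add]
    have e2 : (mexp ((-Complex.I * Δt) • (H₀ + H₁))).mulVec ψ0
        = (exp (Δt • (A + B)) ψ0).ofLp := by
      rw [← hmv, hΦexp, hsm, map_add, smul_add]
    rw [e1, e2]
  -- noise integrand
  set f : Ω → ℝ → ℝ := fun ω s => ‖(D ω) (exp (s • B) ψ0)‖ with hf
  have hfc : ∀ ω, Continuous (f ω) := by
    intro ω
    exact ((D ω).continuous.comp ((cont_exp_smul B).clm_apply continuous_const)).norm
  set a : Ω → ℝ := fun ω => ∫ s in (0:ℝ)..Δt, f ω s with ha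
  have ha0 : ∀ ω, 0 ≤ a ω := fun ω =>
    intervalIntegral.integral_nonneg hΔt (fun s _ => norm_nonneg _)
  set K := l2opNorm (H₀ * H₁ - H₁ * H₀) with hKdef
  have hK0 : 0 ≤ K := norm_nonneg _
  set b := Δt ^ 2 / 2 * K with hb
  have hb0 : 0 ≤ b := by positivity
  -- commutator norm identification
  have hKcomm : ‖A * B - B * A‖ = K := by
    have hmul : (-Complex.I) * (-Complex.I) = -1 := by
      rw [neg_mul_neg, Complex.I_mul_I]
    have hPhi : Φ (H₀ * H₁ - H₁ * H₀) = T₀ * T₁ - T₁ * T₀ := by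
      rw [map_sub, map_mul, map_mul]
    rw [hA, hB, smul_mul_smul_comm, smul_mul_smul_comm, hmul]
    have hns : (-1 : ℂ) • (T₀ * T₁) - (-1 : ℂ) • (T₁ * T₀) = -(T₀ * T₁ - T₁ * T₀) := by
      module
    rw [hns, norm_neg, hKdef]
    unfold l2opNorm
    rw [← hΦdef, hPhi]
  -- per-ω splitting
  have hsplit : ∀ ω, ‖χ ω‖ ≤ a ω + b := by
    intro ω
    rw [hχ' ω]
    have step : (exp (Δt • A) (exp (Δt • (B + Dc ω)) ψ0) - exp (Δt • (A + B)) ψ0)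
        = exp (Δt • A) (exp (Δt • (B + Dc ω)) ψ0 - exp (Δt • B) ψ0)
          + (exp (Δt • A) (exp (Δt • B) ψ0) - exp (Δt • (A + B)) ψ0) := by
      rw [map_sub]; abel
    rw [step]
    refine (norm_add_le _ _).trans (add_le_add ?_ ?_)
    · rw [skew_exp_isometry' A hAskew Δt]
      have hBD : star (B + Dc ω) = -(B + Dc ω) := by
        exact (star_add B (Dc ω)).trans (by rw [hBskew, hDcskew ω]; abel)
      have := duhamel_norm_le (B + Dc ω) B hBD ψ0 Δt hΔt
      rw [norm_sub_rev] at this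
      refine this.trans (le_of_eq (intervalIntegral.integral_congr fun s _ => ?_))
      have : B - (B + Dc ω) = -(Dc ω) := by abel
      rw [this, ContinuousLinearMap.neg_apply, norm_neg, hDc]
      simp only [ContinuousLinearMap.smul_apply, norm_smul, norm_neg, Complex.norm_I]
      rw [one_mul]
    · have := trotter_bias_le A B hAskew hBskew ψ0 Δt hΔt
      rw [hψ0, mul_one, hKcomm] at this
      exact this
  -- variance bound
  have hvar : ∑ ω, w ω * (a ω) ^ 2 ≤ Λ * Δt ^ 2 := by
    have hCS : ∀ ω, (a ω) ^ 2 ≤ Δt * ∫ s in (0:ℝ)..Δt, (f ω s) ^ 2 := fun ω =>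
      sq_integral_le (f ω) (hfc ω) Δt hΔt
    have hpt : ∀ s : ℝ, ∑ ω, w ω * (f ω s) ^ 2 ≤ Λ := by
      intro s
      set φ := exp (s • B) ψ0 with hφ
      have hφ1 : ‖φ‖ = 1 := by rw [hφ, skew_exp_isometry' B hBskew s, hψ0]
      set S := ∑ ω, (w ω : ℂ) • (δH ω) ^ 2 with hS
      have hsum : ∑ ω, w ω * (f ω s) ^ 2 = (inner (𝕜 := ℂ) ((Φ S) φ) φ).re := by
        have hterm : ∀ ω, w ω * (f ω s) ^ 2
            = (inner (𝕜 := ℂ) (((w ω : ℂ) • (D ω * D ω)) φ) φ).re := by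
          intro ω
          have hsd : star (D ω) = D ω := by
            rw [hD]
            simp only
            rw [← map_star, Matrix.star_eq_conjTranspose, (hδH ω).eq]
          have h1 : (inner (𝕜 := ℂ) ((D ω * D ω) φ) φ)
              = inner (𝕜 := ℂ) ((D ω) φ) ((D ω) φ) := by
            rw [ContinuousLinearMap.mul_apply, ← ContinuousLinearMap.adjoint_inner_left (D ω),
              ← ContinuousLinearMap.star_eq_adjoint, hsd]
          have h2 : (inner (𝕜 := ℂ) ((D ω) φ) ((D ω) φ)).re = ‖(D ω) φ‖ ^ 2 := by
            exact inner_self_eq_norm_sq (𝕜 := ℂ) _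
          rw [ContinuousLinearMap.smul_apply, inner_smul_left, Complex.conj_ofReal,
            Complex.re_ofReal_mul, h1, h2]
        rw [Finset.sum_congr rfl (fun ω _ => hterm ω)]
        have hmapS : Φ S = ∑ ω, (w ω : ℂ) • (D ω * D ω) := by
          rw [hS, map_sum]
          refine Finset.sum_congr rfl fun ω _ => ?_
          rw [map_smul, map_pow, sq]
        rw [hmapS]
        rw [ContinuousLinearMap.sum_apply, sum_inner]
        rw [Complex.re_sum]
      rw [hsum]
      have h3 : (inner (𝕜 := ℂ) ((Φ S) φ) φ).re ≤ ‖(inner (𝕜 := ℂ) ((Φ S) φ) φ)‖ :=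
        Complex.re_le_norm _
      refine h3.trans ((norm_inner_le_norm _ _).trans ?_)
      have h4 : ‖(Φ S) φ‖ ≤ ‖Φ S‖ * ‖φ‖ := ContinuousLinearMap.le_opNorm _ _
      have h5 : ‖Φ S‖ ≤ Λ := by
        have h := hΛ
        unfold l2opNorm at h
        rw [← hΦdef] at h
        exact h
      calc ‖(Φ S) φ‖ * ‖φ‖ ≤ (‖Φ S‖ * ‖φ‖) * ‖φ‖ :=
            mul_le_mul_of_nonneg_right h4 (norm_nonneg _)
        _ = ‖Φ S‖ := by rw [hφ1]; ring
        _ ≤ Λ := h5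
    calc ∑ ω, w ω * (a ω) ^ 2
        ≤ ∑ ω, w ω * (Δt * ∫ s in (0:ℝ)..Δt, (f ω s) ^ 2) :=
          Finset.sum_le_sum fun ω _ => mul_le_mul_of_nonneg_left (hCS ω) (hw ω)
      _ = Δt * ∑ ω, ∫ s in (0:ℝ)..Δt, w ω * (f ω s) ^ 2 := by
          rw [Finset.mul_sum]
          refine Finset.sum_congr rfl fun ω _ => ?_
          rw [intervalIntegral.integral_const_mul]
          ring
      _ = Δt * ∫ s in (0:ℝ)..Δt, ∑ ω, w ω * (f ω s) ^ 2 := by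
          rw [intervalIntegral.integral_finset_sum]
          intro ω _
          exact (continuous_const.mul ((hfc ω).pow 2)).intervalIntegrable 0 Δt
      _ ≤ Δt * ∫ s in (0:ℝ)..Δt, Λ := by
          refine mul_le_mul_of_nonneg_left ?_ hΔt
          refine intervalIntegral.integral_mono_on hΔt ?_ intervalIntegrable_const
            fun s _ => hpt s
          exact (continuous_finset_sum _ fun ω _ =>
            continuous_const.mul ((hfc ω).pow 2)).intervalIntegrable 0 Δt
      _ = Λ * Δt ^ 2 := by
          rw [intervalIntegral.integral_const, sub_zero, smul_eq_mul]; ring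
  -- final assembly
  have hre : ∀ x : EuclideanSpace ℂ (Fin d), (inner (𝕜 := ℂ) x x).re = ‖x‖ ^ 2 :=
    fun x => inner_self_eq_norm_sq (𝕜 := ℂ) x
  calc ∑ ω, w ω * (inner (𝕜 := ℂ) (χ ω) (χ ω)).re
      = ∑ ω, w ω * ‖χ ω‖ ^ 2 := by
        refine Finset.sum_congr rfl fun ω _ => ?_
        rw [hre]
    _ ≤ ∑ ω, w ω * (2 * (a ω) ^ 2 + 2 * b ^ 2) := by
        refine Finset.sum_le_sum fun ω _ => mul_le_mul_of_nonneg_left ?_ (hw ω)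
        have h1 : ‖χ ω‖ ^ 2 ≤ (a ω + b) ^ 2 :=
          pow_le_pow_left₀ (norm_nonneg _) (hsplit ω) 2
        nlinarith [sq_nonneg (a ω - b)]
    _ = 2 * (∑ ω, w ω * (a ω) ^ 2) + 2 * b ^ 2 := by
        have hterm : ∀ ω : Ω, w ω * (2 * (a ω) ^ 2 + 2 * b ^ 2)
            = 2 * (w ω * (a ω) ^ 2) + 2 * b ^ 2 * w ω := fun ω => by ring
        rw [Finset.sum_congr rfl fun ω _ => hterm ω, Finset.sum_add_distrib,
          ← Finset.mul_sum, ← Finset.mul_sum, hwsum, mul_one]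
    _ ≤ 2 * (Λ * Δt ^ 2) + 2 * b ^ 2 := by
        have := hvar
        nlinarith [hb0]
    _ ≤ 2 * Λ * Δt ^ 2 + Δt ^ 4 * K ^ 2 := by
        rw [hb]
        have : (Δt ^ 2 / 2 * K) ^ 2 = Δt ^ 4 * K ^ 2 / 4 := by ring
        nlinarith [sq_nonneg (Δt ^ 2 * K)]
end
end

section
/- Let δH be a Hermitian random matrix with ‖δH‖ ≤ Γ almost surely and ‖E[δH²]‖ ≤ Λ, H₀, H₁ Hermitian, ψ(0) a unit vector, and χ(Δt) = exp(-iΔtH₀)exp(-iΔt(H₁+δH))ψ(0) - exp(-iΔt(H₀+H₁))ψ(0). Then almost surely ⟨χ(Δt),χ(Δt)⟩^{1/2} ≤ Δt·Γ + (Δt²/2)·‖[H₀,H₁]‖. -/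
noncomputable section

open scoped BigOperators

namespace OneStepAux

open NormedSpace

variable {A : Type*} [NormedRing A] [NormedAlgebra ℝ A] [CompleteSpace A]

lemma hasDerivAt_exp (X : A) (s : ℝ) :
    HasDerivAt (fun u : ℝ => exp (u • X)) (exp (s • X) * X) s :=
  hasDerivAt_exp_smul_const X s

omit [CompleteSpace A] in
lemma commute_exp (X : A) (s : ℝ) : exp (s • X) * X = X * exp (s • X) :=
  (((Commute.refl X).smul_left s).exp_left).eq

/-- Duhamel-type bound: difference of exponentials. -/
lemma exp_diff_le (X Y : A) (hX : ∀ s : ℝ, ‖exp (s • X)‖ ≤ 1)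
    (hY : ∀ s : ℝ, ‖exp (s • Y)‖ ≤ 1) {t : ℝ} (ht : 0 ≤ t) :
    ‖exp (t • X) - exp (t • Y)‖ ≤ t * ‖X - Y‖ := by
  set f : ℝ → A := fun s => exp (s • X) * exp ((t - s) • Y) with hf
  have hderiv : ∀ s : ℝ, HasDerivAt f (exp (s • X) * (X - Y) * exp ((t - s) • Y)) s := by
    intro s
    have h1 : HasDerivAt (fun u : ℝ => exp (u • X)) (exp (s • X) * X) s := hasDerivAt_exp X s
    have h2 : HasDerivAt (fun u : ℝ => exp ((t - u) • Y))
        ((exp ((t - s) • Y) * Y) * (-1)) s := by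
      simpa using HasDerivAt.comp_const_sub t s (hasDerivAt_exp Y (t - s))
    have := h1.mul h2
    convert this using 1
    · rfl
    rw [mul_neg_one, commute_exp Y (t - s)]
    noncomm_ring
  have hbound : ∀ s : ℝ, ‖exp (s • X) * (X - Y) * exp ((t - s) • Y)‖ ≤ ‖X - Y‖ := by
    intro s
    calc ‖exp (s • X) * (X - Y) * exp ((t - s) • Y)‖
        ≤ ‖exp (s • X) * (X - Y)‖ * ‖exp ((t - s) • Y)‖ := norm_mul_le _ _
      _ ≤ (‖exp (s • X)‖ * ‖X - Y‖) * 1 := by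
          apply mul_le_mul (norm_mul_le _ _) (hY _) (norm_nonneg _)
          positivity
      _ ≤ (1 * ‖X - Y‖) * 1 := by
          have := hX s
          gcongr
      _ = ‖X - Y‖ := by ring
  have key : ‖f t - f 0‖ ≤ ‖X - Y‖ * ‖t - 0‖ := by
    refine Convex.norm_image_sub_le_of_norm_hasDerivWithin_le
      (fun s _ => (hderiv s).hasDerivWithinAt) (fun s _ => hbound s) convex_univ
      (Set.mem_univ 0) (Set.mem_univ t)
  have hft : f t = exp (t • X) := by simp [hf]
  have hf0 : f 0 = exp (t • Y) := by simp [hf]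
  rw [hft, hf0] at key
  calc ‖exp (t • X) - exp (t • Y)‖ ≤ ‖X - Y‖ * ‖t - 0‖ := key
    _ = t * ‖X - Y‖ := by rw [sub_zero, Real.norm_of_nonneg ht]; ring

/-- Commutator with exponential grows at most linearly. -/
lemma comm_exp_le (Y C : A) (hY : ∀ s : ℝ, ‖exp (s • Y)‖ ≤ 1) {t : ℝ} (ht : 0 ≤ t) :
    ‖exp (t • Y) * C - C * exp (t • Y)‖ ≤ t * ‖Y * C - C * Y‖ := by
  set f : ℝ → A := fun s => exp (s • Y) * C * exp ((t - s) • Y) with hf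
  have hderiv : ∀ s : ℝ,
      HasDerivAt f (exp (s • Y) * (Y * C - C * Y) * exp ((t - s) • Y)) s := by
    intro s
    have h2 : HasDerivAt (fun u : ℝ => exp ((t - u) • Y))
        ((exp ((t - s) • Y) * Y) * (-1)) s := by
      simpa using HasDerivAt.comp_const_sub t s (hasDerivAt_exp Y (t - s))
    have h1 : HasDerivAt (fun u : ℝ => exp (u • Y) * C) (exp (s • Y) * Y * C) s := by
      simpa using (hasDerivAt_exp Y s).mul_const C
    have := h1.mul h2
    convert this using 1
    · rfl
    rw [mul_neg_one, commute_exp Y (t - s)]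
    noncomm_ring
  have hbound : ∀ s : ℝ, ‖exp (s • Y) * (Y * C - C * Y) * exp ((t - s) • Y)‖
      ≤ ‖Y * C - C * Y‖ := by
    intro s
    calc ‖exp (s • Y) * (Y * C - C * Y) * exp ((t - s) • Y)‖
        ≤ ‖exp (s • Y) * (Y * C - C * Y)‖ * ‖exp ((t - s) • Y)‖ := norm_mul_le _ _
      _ ≤ (‖exp (s • Y)‖ * ‖Y * C - C * Y‖) * 1 := by
          apply mul_le_mul (norm_mul_le _ _) (hY _) (norm_nonneg _); positivity
      _ ≤ (1 * ‖Y * C - C * Y‖) * 1 := by have := hY s; gcongr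
      _ = ‖Y * C - C * Y‖ := by ring
  have key : ‖f t - f 0‖ ≤ ‖Y * C - C * Y‖ * ‖t - 0‖ :=
    Convex.norm_image_sub_le_of_norm_hasDerivWithin_le
      (fun s _ => (hderiv s).hasDerivWithinAt) (fun s _ => hbound s) convex_univ
      (Set.mem_univ 0) (Set.mem_univ t)
  have hft : f t = exp (t • Y) * C := by simp [hf]
  have hf0 : f 0 = C * exp (t • Y) := by simp [hf]
  rw [hft, hf0] at key
  calc ‖exp (t • Y) * C - C * exp (t • Y)‖ ≤ ‖Y * C - C * Y‖ * ‖t - 0‖ := key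
    _ = t * ‖Y * C - C * Y‖ := by rw [sub_zero, Real.norm_of_nonneg ht]; ring

/-- First-order Trotter error bound. -/
lemma trotter_le (X Y : A) (hX : ∀ s : ℝ, ‖exp (s • X)‖ ≤ 1)
    (hY : ∀ s : ℝ, ‖exp (s • Y)‖ ≤ 1)
    (hXY : ∀ s : ℝ, ‖exp (s • (X + Y))‖ ≤ 1) {t : ℝ} (ht : 0 ≤ t) :
    ‖exp (t • X) * exp (t • Y) - exp (t • (X + Y))‖ ≤ t ^ 2 / 2 * ‖X * Y - Y * X‖ := by
  letI : NormedAlgebra ℚ A := .restrictScalars ℚ ℝ A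
  set Z : A := -(X + Y) with hZdef
  have hZ : ∀ s : ℝ, ‖exp (s • Z)‖ ≤ 1 := by
    intro s
    have : s • Z = (-s) • (X + Y) := by rw [hZdef, smul_neg, neg_smul]
    rw [this]; exact hXY (-s)
  set W : ℝ → A := fun s => exp (s • X) * exp (s • Y) * exp (s • Z) with hW
  set D : ℝ → A := fun s =>
    exp (s • X) * (X * exp (s • Y) - exp (s • Y) * X) * exp (s • Z) with hD
  have hderiv : ∀ s : ℝ, HasDerivAt W (D s) s := by
    intro s
    have h := ((hasDerivAt_exp X s).mul (hasDerivAt_exp Y s)).mul (hasDerivAt_exp Z s)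
    convert h using 1
    · rfl
    rw [hD, commute_exp Z s, hZdef]
    simp only [Pi.mul_apply]
    noncomm_ring
  have c1 : Continuous fun s : ℝ => exp (s • X) :=
    exp_continuous.comp (continuous_id.smul continuous_const)
  have c2 : Continuous fun s : ℝ => exp (s • Y) :=
    exp_continuous.comp (continuous_id.smul continuous_const)
  have c3 : Continuous fun s : ℝ => exp (s • Z) :=
    exp_continuous.comp (continuous_id.smul continuous_const)
  have cD : Continuous D :=
    (c1.mul ((continuous_const.mul c2).sub (c2.mul continuous_const))).mul c3
  have hftc : ∫ s in (0:ℝ)..t, D s = W t - W 0 :=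
    intervalIntegral.integral_eq_sub_of_hasDerivAt (fun s _ => hderiv s)
      (cD.intervalIntegrable 0 t)
  have hW0 : W 0 = 1 := by simp [hW]
  set c : ℝ := ‖X * Y - Y * X‖ with hc
  have hDbound : ∀ s ∈ Set.Ioc (0:ℝ) t, ‖D s‖ ≤ s * c := by
    intro s hs
    have hs0 : (0:ℝ) ≤ s := le_of_lt hs.1
    have hcomm : ‖X * exp (s • Y) - exp (s • Y) * X‖ ≤ s * c := by
      have h := comm_exp_le Y X hY hs0
      rw [norm_sub_rev] at h
      calc ‖X * exp (s • Y) - exp (s • Y) * X‖ ≤ s * ‖Y * X - X * Y‖ := h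
        _ = s * c := by rw [hc, norm_sub_rev]
    calc ‖D s‖ ≤ ‖exp (s • X) * (X * exp (s • Y) - exp (s • Y) * X)‖ *
          ‖exp (s • Z)‖ := norm_mul_le _ _
      _ ≤ (‖exp (s • X)‖ * ‖X * exp (s • Y) - exp (s • Y) * X‖) * 1 := by
          apply mul_le_mul (norm_mul_le _ _) (hZ _) (norm_nonneg _); positivity
      _ ≤ (1 * (s * c)) * 1 := by
          have h1 := hX s
          have h3 : (0:ℝ) ≤ s * c := le_trans (norm_nonneg _) hcomm
          exact mul_le_mul (mul_le_mul h1 hcomm (norm_nonneg _) zero_le_one)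
            le_rfl zero_le_one (by positivity)
      _ = s * c := by ring
  have hnorm : ‖W t - 1‖ ≤ t ^ 2 / 2 * c := by
    rw [← hW0, ← hftc]
    have hcnn : 0 ≤ c := norm_nonneg _
    have hle : ‖∫ s in (0:ℝ)..t, D s‖ ≤ |∫ s in (0:ℝ)..t, s * c| := by
      apply intervalIntegral.norm_integral_le_abs_of_norm_le
      · refine (MeasureTheory.ae_restrict_iff' measurableSet_uIoc).mpr ?_
        filter_upwards with s hs
        rw [Set.uIoc_of_le ht] at hs
        exact hDbound s hs
      · exact (continuous_id.mul continuous_const).intervalIntegrable 0 t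
    refine hle.trans ?_
    rw [intervalIntegral.integral_mul_const, integral_id]
    rw [show ((t:ℝ)^2 - 0^2)/2 * c = t^2/2*c by ring, abs_of_nonneg (by positivity)]
  have hinv : exp (t • Z) * exp (t • (X + Y)) = 1 := by
    rw [← exp_add_of_commute (((Commute.refl (X+Y)).neg_left.smul_left t).smul_right t)]
    rw [smul_neg, neg_add_cancel, exp_zero]
  have hfact : exp (t • X) * exp (t • Y) - exp (t • (X + Y))
      = (W t - 1) * exp (t • (X + Y)) := by
    rw [sub_mul, one_mul, hW]
    simp only [mul_assoc, hinv, mul_one]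
  rw [hfact]
  calc ‖(W t - 1) * exp (t • (X + Y))‖ ≤ ‖W t - 1‖ * ‖exp (t • (X + Y))‖ := norm_mul_le _ _
    _ ≤ (t ^ 2 / 2 * c) * 1 := mul_le_mul hnorm (hXY t) (norm_nonneg _) (by positivity)
    _ = t ^ 2 / 2 * c := by ring

end OneStepAux

namespace OneStepAux

open NormedSpace

variable {d : ℕ}

local notation "CLMd" => (EuclideanSpace ℂ (Fin d) →L[ℂ] EuclideanSpace ℂ (Fin d))

lemma exp_skew_norm_le (X : CLMd) (hX : star X = -X) (s : ℝ) :
    ‖exp (s • X)‖ ≤ 1 := by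
  letI : NormedAlgebra ℚ CLMd := .restrictScalars ℚ ℂ _
  have hsX : star (s • X) = -(s • X) := by
    have hcoe : (s : ℂ) • X = s • X := Complex.coe_smul s X
    rw [← hcoe, star_smul, hX, Complex.star_def, Complex.conj_ofReal, smul_neg]
  have hstar : star (exp (s • X)) = exp (-(s • X)) := by
    rw [star_exp, hsX]
  have hmul : star (exp (s • X)) * exp (s • X) = 1 := by
    rw [hstar, ← exp_add_of_commute (Commute.refl (s • X)).neg_left, neg_add_cancel, exp_zero]
  have hsq : ‖exp (s • X)‖ * ‖exp (s • X)‖ ≤ 1 := by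
    rw [← CStarRing.norm_star_mul_self, hmul]
    exact ContinuousLinearMap.norm_id_le
  nlinarith [norm_nonneg (exp (s • X))]

set_option maxHeartbeats 800000 in
lemma phi_exp (M : Matrix (Fin d) (Fin d) ℂ) :
    Matrix.toEuclideanCLM (𝕜 := ℂ) (exp M) = exp (Matrix.toEuclideanCLM (𝕜 := ℂ) M) := by
  letI : SeminormedRing (Matrix (Fin d) (Fin d) ℂ) := Matrix.linftyOpSemiNormedRing
  letI : NormedRing (Matrix (Fin d) (Fin d) ℂ) := Matrix.linftyOpNormedRing
  letI : NormedAlgebra ℂ (Matrix (Fin d) (Fin d) ℂ) := Matrix.linftyOpNormedAlgebra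
  letI : NormedAlgebra ℚ (Matrix (Fin d) (Fin d) ℂ) := .restrictScalars ℚ ℂ _
  letI : NormedAlgebra ℚ CLMd := .restrictScalars ℚ ℂ _
  have hlin : IsLinearMap ℂ (Matrix.toEuclideanCLM (𝕜 := ℂ) (n := Fin d)) :=
    { map_add := map_add _, map_smul := map_smul _ }
  have hcont : Continuous (Matrix.toEuclideanCLM (𝕜 := ℂ) (n := Fin d)) :=
    LinearMap.continuous_of_finiteDimensional (hlin.mk' _)
  exact map_exp ((Matrix.toEuclideanCLM (𝕜 := ℂ) (n := Fin d)).toRingEquiv) hcont M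

lemma exp_real_eq (X : CLMd) : exp X = exp X := by
  rfl

lemma phi_selfAdjoint {M : Matrix (Fin d) (Fin d) ℂ} (h : M.IsHermitian) :
    star (Matrix.toEuclideanCLM (𝕜 := ℂ) M) = Matrix.toEuclideanCLM (𝕜 := ℂ) M := by
  rw [← map_star]
  exact congrArg _ ((Matrix.star_eq_conjTranspose M).trans h)

lemma skew_of_selfAdjoint {X : CLMd} (h : star X = X) :
    star ((-Complex.I) • X) = -((-Complex.I) • X) := by
  rw [star_smul, h]
  rw [show -(-Complex.I • X) = (-(-Complex.I)) • X from (neg_smul _ _).symm, neg_neg]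
  simp

end OneStepAux

open OneStepAux NormedSpace in
set_option maxHeartbeats 1600000 in
set_option synthInstance.maxHeartbeats 400000 in
theorem one_step_almost_sure_error_bound {d : ℕ} {Ω : Type*} [Fintype Ω]
    (w : Ω → ℝ) (hw : ∀ ω, 0 ≤ w ω) (hwsum : ∑ ω, w ω = 1)
    (H₀ H₁ : Matrix (Fin d) (Fin d) ℂ) (hH₀ : H₀.IsHermitian) (hH₁ : H₁.IsHermitian)
    (δH : Ω → Matrix (Fin d) (Fin d) ℂ) (hδH : ∀ ω, (δH ω).IsHermitian)
    (Γ : ℝ) (hΓ : ∀ ω, l2opNorm (δH ω) ≤ Γ)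
    (Λ : ℝ) (hΛ : l2opNorm (∑ ω, (w ω : ℂ) • (δH ω) ^ 2) ≤ Λ)
    (ψ0 : EuclideanSpace ℂ (Fin d)) (hψ0 : ‖ψ0‖ = 1)
    (Δt : ℝ) (hΔt : 0 ≤ Δt)
    (χ : Ω → EuclideanSpace ℂ (Fin d))
    (hχ : ∀ ω, χ ω =
      (mexp ((-Complex.I * Δt) • H₀) * mexp ((-Complex.I * Δt) • (H₁ + δH ω))).mulVec ψ0
      - (mexp ((-Complex.I * Δt) • (H₀ + H₁))).mulVec ψ0) :
    ∀ ω, Real.sqrt ((inner (𝕜 := ℂ) (χ ω) (χ ω)).re) ≤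
      Δt * Γ + Δt ^ 2 / 2 * l2opNorm (H₀ * H₁ - H₁ * H₀) := by
  intro ω
  set φ := Matrix.toEuclideanCLM (𝕜 := ℂ) (n := Fin d) with hφ
  set a := φ H₀ with ha
  set b := φ H₁ with hb
  set e := φ (δH ω) with he
  set X := (-Complex.I) • a with hX
  set Y := (-Complex.I) • b with hY
  set Yδ := (-Complex.I) • (b + e) with hYδ
  -- selfadjointness
  have hsa : star a = a := phi_selfAdjoint hH₀
  have hsb : star b = b := phi_selfAdjoint hH₁
  have hse : star e = e := phi_selfAdjoint (hδH ω)
  -- norm bounds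
  have hXn : ∀ s : ℝ, ‖exp (s • X)‖ ≤ 1 :=
    exp_skew_norm_le X (skew_of_selfAdjoint hsa)
  have hYn : ∀ s : ℝ, ‖exp (s • Y)‖ ≤ 1 :=
    exp_skew_norm_le Y (skew_of_selfAdjoint hsb)
  have hYδn : ∀ s : ℝ, ‖exp (s • Yδ)‖ ≤ 1 := by
    apply exp_skew_norm_le
    apply skew_of_selfAdjoint
    exact (star_add b e).trans (congrArg₂ (· + ·) hsb hse)
  have hXYn : ∀ s : ℝ, ‖exp (s • (X + Y))‖ ≤ 1 := by
    have : X + Y = (-Complex.I) • (a + b) := by rw [smul_add]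
    rw [this]
    apply exp_skew_norm_le
    apply skew_of_selfAdjoint
    exact (star_add a b).trans (congrArg₂ (· + ·) hsa hsb)
  -- conversion of the exponentials
  have hconv : ∀ (M : Matrix (Fin d) (Fin d) ℂ),
      φ (mexp ((-Complex.I * Δt) • M)) = exp (Δt • ((-Complex.I) • φ M)) := by
    intro M
    rw [mexp, phi_exp, exp_real_eq]
    congr 1
    have hcoe : (Δt:ℂ) • ((-Complex.I) • φ M) = Δt • ((-Complex.I) • φ M) := rfl
    rw [map_smul, ← hcoe, smul_smul, mul_comm (-Complex.I) (Δt:ℂ)]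
  -- rewrite χ ω
  have hχ1 : χ ω = (φ (mexp ((-Complex.I * Δt) • H₀) * mexp ((-Complex.I * Δt) • (H₁ + δH ω)))
      - φ (mexp ((-Complex.I * Δt) • (H₀ + H₁)))) ψ0 := by
    rw [ContinuousLinearMap.sub_apply]
    apply WithLp.ofLp_injective 2
    rw [hχ ω]
    rfl
  have hχ2 : χ ω = (exp (Δt • X) * exp (Δt • Yδ) - exp (Δt • (X + Y))) ψ0 := by
    rw [hχ1, map_mul, hconv, hconv, hconv]
    congr 2
    · rw [map_add, ← hb, ← he, hYδ]
    · rw [map_add, ← ha, ← hb, smul_add, hX, hY]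
  -- norm bound on the operator difference
  have hsplit : exp (Δt • X) * exp (Δt • Yδ) - exp (Δt • (X + Y))
      = exp (Δt • X) * (exp (Δt • Yδ) - exp (Δt • Y))
        + (exp (Δt • X) * exp (Δt • Y) - exp (Δt • (X + Y))) := by
    rw [mul_sub]; abel
  have hterm1 : ‖exp (Δt • X) * (exp (Δt • Yδ) - exp (Δt • Y))‖ ≤ Δt * Γ := by
    have hd : ‖Yδ - Y‖ = l2opNorm (δH ω) := by
      have h9 : Yδ - Y = -Complex.I • e := by rw [hYδ, hY]; module
      have h10 : ‖-Complex.I • e‖ = ‖-Complex.I‖ * ‖e‖ :=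
        norm_smul (α := ℂ)
          (β := EuclideanSpace ℂ (Fin d) →L[ℂ] EuclideanSpace ℂ (Fin d)) _ _
      rw [h9, h10]
      simp [l2opNorm, he]; rfl
    calc ‖exp (Δt • X) * (exp (Δt • Yδ) - exp (Δt • Y))‖
        ≤ ‖exp (Δt • X)‖ * ‖exp (Δt • Yδ) - exp (Δt • Y)‖ := norm_mul_le _ _
      _ ≤ 1 * (Δt * ‖Yδ - Y‖) :=
          mul_le_mul (hXn Δt) (exp_diff_le Yδ Y hYδn hYn hΔt) (norm_nonneg _) zero_le_one
      _ = Δt * ‖Yδ - Y‖ := one_mul _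
      _ ≤ Δt * Γ := by
          rw [hd] at *
          exact mul_le_mul_of_nonneg_left (hΓ ω) hΔt
  have hcommeq : ‖X * Y - Y * X‖ = l2opNorm (H₀ * H₁ - H₁ * H₀) := by
    have h1 : X * Y = ((-Complex.I) * (-Complex.I)) • (a * b) := by
      rw [hX, hY, smul_mul_assoc, mul_smul_comm, smul_smul]
    have h2 : Y * X = ((-Complex.I) * (-Complex.I)) • (b * a) := by
      rw [hX, hY, smul_mul_assoc, mul_smul_comm, smul_smul]
    have h3 : (-Complex.I * -Complex.I) • (a * b) - (-Complex.I * -Complex.I) • (b * a)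
        = (-Complex.I * -Complex.I) • (a * b - b * a) := by module
    have h4 : ‖(-Complex.I * -Complex.I) • (a * b - b * a)‖
        = ‖(-Complex.I * -Complex.I)‖ * ‖a * b - b * a‖ :=
        norm_smul (α := ℂ)
          (β := EuclideanSpace ℂ (Fin d) →L[ℂ] EuclideanSpace ℂ (Fin d)) _ _
    rw [h1, h2, h3, h4]
    have : ‖(-Complex.I) * (-Complex.I)‖ = 1 := by simp
    rw [this, one_mul, l2opNorm, map_sub, map_mul, map_mul]
  have hterm2 : ‖exp (Δt • X) * exp (Δt • Y) - exp (Δt • (X + Y))‖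
      ≤ Δt ^ 2 / 2 * l2opNorm (H₀ * H₁ - H₁ * H₀) := by
    rw [← hcommeq]
    exact trotter_le X Y hXn hYn hXYn hΔt
  have hop : ‖exp (Δt • X) * exp (Δt • Yδ) - exp (Δt • (X + Y))‖
      ≤ Δt * Γ + Δt ^ 2 / 2 * l2opNorm (H₀ * H₁ - H₁ * H₀) := by
    rw [hsplit]
    exact le_trans (norm_add_le _ _) (add_le_add hterm1 hterm2)
  -- conclude
  have hlhs : Real.sqrt ((inner (𝕜 := ℂ) (χ ω) (χ ω)).re) = ‖χ ω‖ := by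
    rw [show (inner (𝕜 := ℂ) (χ ω) (χ ω)).re
        = RCLike.re (inner (𝕜 := ℂ) (χ ω) (χ ω)) from rfl,
      inner_self_eq_norm_sq]
    exact Real.sqrt_sq (norm_nonneg _)
  rw [hlhs, hχ2]
  calc ‖(exp (Δt • X) * exp (Δt • Yδ) - exp (Δt • (X + Y))) ψ0‖
      ≤ ‖exp (Δt • X) * exp (Δt • Yδ) - exp (Δt • (X + Y))‖ * ‖ψ0‖ :=
        ContinuousLinearMap.le_opNorm _ _
    _ = ‖exp (Δt • X) * exp (Δt • Yδ) - exp (Δt • (X + Y))‖ := by rw [hψ0, mul_one]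
    _ ≤ Δt * Γ + Δt ^ 2 / 2 * l2opNorm (H₀ * H₁ - H₁ * H₀) := hop
end
end
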